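/- arXiv:2307.13737 — 5 statements merged into one kernel-verified Lean document; each statement's English description precedes it below -/
import Mathlib

section
/- If a measurement assemblage {M_{a|x}}_{a,x} on ℂ^{d_A} is k-simulable with simulators {B_{b|y}}_{b,y} and conditional probability distributions p(y|x), q(a|x,b,y), then the steering equivalent observables {S_{a|x}}_{a,x} form a k-simulable measurement assemblage on ℂ^{d_B}, with the same distributions p and q and with simulators B̃_{b|y} = ρ_B^{-1/2} tr_A[(B_{b|y} ⊗ 𝟙)ρ_AB] ρ_B^{-1/2}, i.e. S_{a|x} = Σ_{y=1}^k p(y|x) Σ_b q(a|x,b,y) B̃_{b|y} for all a,x. -/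
open Matrix BigOperators
open scoped Kronecker ComplexOrder

noncomputable section

/-- A POVM: a finite family of positive semidefinite matrices summing to the identity. -/
def IsPOVM {ι n : Type*} [Fintype ι] [Fintype n] [DecidableEq n]
    (M : ι → Matrix n n ℂ) : Prop :=
  (∀ i, (M i).PosSemidef) ∧ ∑ i, M i = 1

/-- A density matrix: positive semidefinite with trace one. -/
def IsDensity {n : Type*} [Fintype n] [DecidableEq n] (ρ : Matrix n n ℂ) : Prop :=
  ρ.PosSemidef ∧ ρ.trace = 1

/-- Partial trace over the first tensor factor. -/
def trA {dA dB : ℕ} (M : Matrix (Fin dA × Fin dB) (Fin dA × Fin dB) ℂ) :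
    Matrix (Fin dB) (Fin dB) ℂ :=
  Matrix.of fun j j' => ∑ i, M (i, j) (i, j')

-- The inverse of the positive square root of a positive semidefinite matrix
-- (junk value if the matrix is not positive semidefinite).
open Classical in
def invSqrt {n : Type*} [Fintype n] [DecidableEq n] (A : Matrix n n ℂ) : Matrix n n ℂ :=
  (if h : A.PosSemidef then h.1.eigenvectorUnitary.1 * diagonal ((↑) ∘ (√·) ∘ h.1.eigenvalues) *
    (star h.1.eigenvectorUnitary : Matrix n n ℂ) else 0)⁻¹

namespace Matrix.PosSemidef

/-- The positive square root of a positive semidefinite matrix. -/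
abbrev sqrt {n : Type*} [Fintype n] [DecidableEq n] {A : Matrix n n ℂ} (h : A.PosSemidef) :
    Matrix n n ℂ :=
  h.1.eigenvectorUnitary.1 * diagonal ((↑) ∘ (√·) ∘ h.1.eigenvalues) *
    (star h.1.eigenvectorUnitary : Matrix n n ℂ)

lemma posSemidef_sqrt {n : Type*} [Fintype n] [DecidableEq n] {A : Matrix n n ℂ}
    (h : A.PosSemidef) : h.sqrt.PosSemidef := by
  have e : (star h.1.eigenvectorUnitary : Matrix n n ℂ) = (h.1.eigenvectorUnitary.1)ᴴ := rfl
  rw [sqrt, e]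
  refine (PosSemidef.diagonal (fun i => ?_)).mul_mul_conjTranspose_same _
  simp [Real.sqrt_nonneg]

lemma sqrt_mul_self {n : Type*} [Fintype n] [DecidableEq n] {A : Matrix n n ℂ}
    (h : A.PosSemidef) : h.sqrt * h.sqrt = A := by
  conv_rhs => rw [h.1.spectral_theorem]
  have hU : (star h.1.eigenvectorUnitary : Matrix n n ℂ) * h.1.eigenvectorUnitary.1 = 1 :=
    Unitary.coe_star_mul_self _
  have hD : diagonal ((↑) ∘ (√·) ∘ h.1.eigenvalues) * diagonal ((↑) ∘ (√·) ∘ h.1.eigenvalues)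
      = diagonal (RCLike.ofReal ∘ h.1.eigenvalues : n → ℂ) := by
    rw [diagonal_mul_diagonal]
    congr 1; funext i
    simp only [Function.comp_apply]
    rw [← Complex.ofReal_mul, Real.mul_self_sqrt (h.eigenvalues_nonneg i)]
    rfl
  rw [sqrt]
  simp only [Matrix.mul_assoc]
  rw [← Matrix.mul_assoc _ _ (diagonal _ * _), hU, Matrix.one_mul, ← Matrix.mul_assoc (diagonal _),
    hD]
  simp [Matrix.mul_assoc, Unitary.conjStarAlgAut_apply]

end Matrix.PosSemidef

/-- The steering-equivalent-observable map: `A ↦ ρ_B^{-1/2} tr_A[(A ⊗ 𝟙) ρ_AB] ρ_B^{-1/2}`. -/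
def SEO {dA dB : ℕ} (ρAB : Matrix (Fin dA × Fin dB) (Fin dA × Fin dB) ℂ)
    (A : Matrix (Fin dA) (Fin dA) ℂ) : Matrix (Fin dB) (Fin dB) ℂ :=
  invSqrt (trA ρAB) * trA ((A ⊗ₖ (1 : Matrix (Fin dB) (Fin dB) ℂ)) * ρAB) * invSqrt (trA ρAB)


section Aux

variable {dA dB : ℕ}

lemma trA_conjTranspose (M : Matrix (Fin dA × Fin dB) (Fin dA × Fin dB) ℂ) :
    (trA M)ᴴ = trA Mᴴ := by
  ext j j'; simp [trA, conjTranspose_apply, map_sum]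

lemma trA_posSemidef {M : Matrix (Fin dA × Fin dB) (Fin dA × Fin dB) ℂ}
    (hM : M.PosSemidef) : (trA M).PosSemidef := by
  refine posSemidef_iff_dotProduct_mulVec.mpr ⟨?_, ?_⟩
  · rw [Matrix.IsHermitian, trA_conjTranspose, hM.1.eq]
  · intro x
    have hterm : ∀ i : Fin dA,
        star (fun p : Fin dA × Fin dB => if p.1 = i then x p.2 else 0) ⬝ᵥ
          M *ᵥ (fun p : Fin dA × Fin dB => if p.1 = i then x p.2 else 0)
        = ∑ j, ∑ j', star (x j) * (M (i, j) (i, j') * x j') := by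
      intro i
      have hin : ∀ p : Fin dA × Fin dB,
          (∑ q, M p q * (if q.1 = i then x q.2 else 0)) = ∑ j', M p (i, j') * x j' := by
        intro p
        rw [Fintype.sum_prod_type, Fintype.sum_eq_single i (fun b hb => by simp [hb])]
        simp
      simp only [dotProduct, mulVec, hin, Pi.star_apply]
      rw [Fintype.sum_prod_type, Fintype.sum_eq_single i (fun b hb => by simp [hb])]
      simp [Finset.mul_sum]
    have key : star x ⬝ᵥ trA M *ᵥ x =
        ∑ i : Fin dA, star (fun p : Fin dA × Fin dB => if p.1 = i then x p.2 else 0) ⬝ᵥ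
          M *ᵥ (fun p : Fin dA × Fin dB => if p.1 = i then x p.2 else 0) := by
      simp only [hterm]
      simp only [dotProduct, mulVec, trA, of_apply, Finset.mul_sum, Finset.sum_mul]
      simp only [Pi.star_apply]
      exact (Finset.sum_congr rfl fun j _ => Finset.sum_comm).trans Finset.sum_comm
    rw [key]
    exact Finset.sum_nonneg fun i _ => hM.dotProduct_mulVec_nonneg _

lemma kron_one_mul_apply (A : Matrix (Fin dA) (Fin dA) ℂ)
    (N : Matrix (Fin dA × Fin dB) (Fin dA × Fin dB) ℂ) (i : Fin dA) (j : Fin dB)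
    (q : Fin dA × Fin dB) :
    ((A ⊗ₖ (1 : Matrix (Fin dB) (Fin dB) ℂ)) * N) (i, j) q = ∑ p1, A i p1 * N (p1, j) q := by
  rw [Matrix.mul_apply, Fintype.sum_prod_type]
  refine Finset.sum_congr rfl fun p1 _ => ?_
  rw [Fintype.sum_eq_single j (fun b hb => by simp [Matrix.one_apply, Ne.symm hb])]
  simp

lemma mul_kron_one_apply (A : Matrix (Fin dA) (Fin dA) ℂ)
    (N : Matrix (Fin dA × Fin dB) (Fin dA × Fin dB) ℂ) (q : Fin dA × Fin dB) (i : Fin dA)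
    (j : Fin dB) :
    (N * (A ⊗ₖ (1 : Matrix (Fin dB) (Fin dB) ℂ))) q (i, j) = ∑ p1, N q (p1, j) * A p1 i := by
  rw [Matrix.mul_apply, Fintype.sum_prod_type]
  refine Finset.sum_congr rfl fun p1 _ => ?_
  rw [Fintype.sum_eq_single j (fun b hb => by simp [Matrix.one_apply, hb])]
  simp

lemma trA_kron_mul_kron (X Y : Matrix (Fin dA) (Fin dA) ℂ)
    (ρ : Matrix (Fin dA × Fin dB) (Fin dA × Fin dB) ℂ) :
    trA ((X ⊗ₖ (1 : Matrix (Fin dB) (Fin dB) ℂ)) * ρ * (Y ⊗ₖ (1 : Matrix (Fin dB) (Fin dB) ℂ)))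
      = trA (((Y * X) ⊗ₖ (1 : Matrix (Fin dB) (Fin dB) ℂ)) * ρ) := by
  ext j j'
  simp only [trA, of_apply]
  have lhs : ∀ i : Fin dA,
      ((X ⊗ₖ (1 : Matrix (Fin dB) (Fin dB) ℂ)) * ρ * (Y ⊗ₖ (1 : Matrix (Fin dB) (Fin dB) ℂ)))
        (i, j) (i, j') = ∑ t, ∑ p1, X i p1 * ρ (p1, j) (t, j') * Y t i := by
    intro i
    rw [mul_kron_one_apply]
    refine Finset.sum_congr rfl fun t _ => ?_
    rw [kron_one_mul_apply, Finset.sum_mul]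
  have rhs : ∀ i : Fin dA,
      (((Y * X) ⊗ₖ (1 : Matrix (Fin dB) (Fin dB) ℂ)) * ρ) (i, j) (i, j')
        = ∑ p1, ∑ t, Y i t * X t p1 * ρ (p1, j) (i, j') := by
    intro i
    rw [kron_one_mul_apply]
    refine Finset.sum_congr rfl fun p1 _ => ?_
    rw [Matrix.mul_apply, Finset.sum_mul]
  simp only [lhs, rhs]
  rw [Finset.sum_comm]
  refine Finset.sum_congr rfl fun t _ => ?_
  rw [Finset.sum_comm]
  exact Finset.sum_congr rfl fun i _ => Finset.sum_congr rfl fun p1 _ => by ring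

lemma kron_one_conjTranspose {s : Matrix (Fin dA) (Fin dA) ℂ} (hs : s.IsHermitian) :
    (s ⊗ₖ (1 : Matrix (Fin dB) (Fin dB) ℂ))ᴴ = s ⊗ₖ (1 : Matrix (Fin dB) (Fin dB) ℂ) := by
  ext p q
  by_cases h : p.2 = q.2
  · simp [conjTranspose_apply, Matrix.one_apply, h, ← hs.apply p.1 q.1]
  · simp [conjTranspose_apply, Matrix.one_apply, h, Ne.symm h]

lemma SEO_add (ρAB : Matrix (Fin dA × Fin dB) (Fin dA × Fin dB) ℂ)
    (A A' : Matrix (Fin dA) (Fin dA) ℂ) :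
    SEO ρAB (A + A') = SEO ρAB A + SEO ρAB A' := by
  have : trA (((A + A') ⊗ₖ (1 : Matrix (Fin dB) (Fin dB) ℂ)) * ρAB)
      = trA ((A ⊗ₖ (1 : Matrix (Fin dB) (Fin dB) ℂ)) * ρAB)
        + trA ((A' ⊗ₖ (1 : Matrix (Fin dB) (Fin dB) ℂ)) * ρAB) := by
    rw [Matrix.add_kronecker, Matrix.add_mul]
    ext j j'; simp [trA, Finset.sum_add_distrib]
  simp [SEO, this, Matrix.mul_add, Matrix.add_mul]

lemma SEO_smul (ρAB : Matrix (Fin dA × Fin dB) (Fin dA × Fin dB) ℂ) (r : ℝ)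
    (A : Matrix (Fin dA) (Fin dA) ℂ) :
    SEO ρAB (r • A) = r • SEO ρAB A := by
  have : trA (((r • A) ⊗ₖ (1 : Matrix (Fin dB) (Fin dB) ℂ)) * ρAB)
      = r • trA ((A ⊗ₖ (1 : Matrix (Fin dB) (Fin dB) ℂ)) * ρAB) := by
    rw [Matrix.smul_kronecker, Matrix.smul_mul]
    ext j j'; simp [trA, Finset.smul_sum]
  simp [SEO, this, Matrix.mul_smul, Matrix.smul_mul]

/-- `SEO ρAB` as an `ℝ`-linear map. -/
def seoLin (ρAB : Matrix (Fin dA × Fin dB) (Fin dA × Fin dB) ℂ) :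
    Matrix (Fin dA) (Fin dA) ℂ →ₗ[ℝ] Matrix (Fin dB) (Fin dB) ℂ where
  toFun := SEO ρAB
  map_add' := SEO_add ρAB
  map_smul' := SEO_smul ρAB

end Aux

set_option maxHeartbeats 1000000 in
/-- if Alice's assemblage is `k`-simulable with simulators `B` and
distributions `p`, `q`, then Bob's steering equivalent observables form a `k`-simulable
assemblage with the same `p`, `q` and simulators `B̃_{b|y} = SEO ρAB (B_{b|y})`. -/
theorem seo_of_kSimulable {dA dB na nx k nb : ℕ}
    (ρAB : Matrix (Fin dA × Fin dB) (Fin dA × Fin dB) ℂ)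
    (hρAB : IsDensity ρAB)
    (hinv : IsUnit (trA ρAB))
    (M : Fin nx → Fin na → Matrix (Fin dA) (Fin dA) ℂ)
    (B : Fin k → Fin nb → Matrix (Fin dA) (Fin dA) ℂ)
    (p : Fin nx → Fin k → ℝ) (q : Fin nx → Fin k → Fin nb → Fin na → ℝ)
    (hM : ∀ x, IsPOVM (M x))
    (hB : ∀ y, IsPOVM (B y))
    (hp0 : ∀ x y, 0 ≤ p x y) (hp1 : ∀ x, ∑ y, p x y = 1)
    (hq0 : ∀ x y b a, 0 ≤ q x y b a) (hq1 : ∀ x y b, ∑ a, q x y b a = 1)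
    (hsim : ∀ x a, M x a = ∑ y, p x y • ∑ b, q x y b a • B y b) :
    (∀ y, IsPOVM (fun b => SEO ρAB (B y b))) ∧
    ∀ x a, SEO ρAB (M x a) = ∑ y, p x y • ∑ b, q x y b a • SEO ρAB (B y b) := by
  have hρB : (trA ρAB).PosSemidef := trA_posSemidef hρAB.1
  have hdet : IsUnit (trA ρAB).det := (Matrix.isUnit_iff_isUnit_det _).mp hinv
  have hsq : hρB.sqrt * hρB.sqrt = trA ρAB := hρB.sqrt_mul_self
  have hdets : IsUnit hρB.sqrt.det := by
    have : IsUnit (hρB.sqrt.det * hρB.sqrt.det) := by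
      rw [← Matrix.det_mul, hsq]; exact hdet
    exact isUnit_of_mul_isUnit_left this
  have hC : invSqrt (trA ρAB) = hρB.sqrt⁻¹ := by unfold invSqrt; rw [dif_pos hρB]
  have hCH : (invSqrt (trA ρAB)).IsHermitian := by
    rw [hC, Matrix.IsHermitian, Matrix.conjTranspose_nonsing_inv, hρB.posSemidef_sqrt.1.eq]
  constructor
  · intro y
    constructor
    · intro b
      have hb := (hB y).1 b
      have hbs : hb.sqrt * hb.sqrt = B y b := hb.sqrt_mul_self
      have h1 : ((hb.sqrt ⊗ₖ (1 : Matrix (Fin dB) (Fin dB) ℂ)) * ρAB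
          * (hb.sqrt ⊗ₖ (1 : Matrix (Fin dB) (Fin dB) ℂ))ᴴ).PosSemidef :=
        hρAB.1.mul_mul_conjTranspose_same _
      rw [kron_one_conjTranspose hb.posSemidef_sqrt.1] at h1
      have hmid : (trA ((B y b ⊗ₖ (1 : Matrix (Fin dB) (Fin dB) ℂ)) * ρAB)).PosSemidef := by
        rw [← hbs, ← trA_kron_mul_kron]
        exact trA_posSemidef h1
      have : SEO ρAB (B y b)
          = invSqrt (trA ρAB) * trA ((B y b ⊗ₖ (1 : Matrix (Fin dB) (Fin dB) ℂ)) * ρAB)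
            * (invSqrt (trA ρAB))ᴴ := by
        rw [hCH.eq]; rfl
      show (SEO ρAB (B y b)).PosSemidef
      rw [this]
      exact hmid.mul_mul_conjTranspose_same _
    · have : (∑ b, SEO ρAB (B y b)) = SEO ρAB (∑ b, B y b) :=
        (map_sum (seoLin ρAB) _ _).symm
      rw [this, (hB y).2]
      show invSqrt (trA ρAB) * trA (((1 : Matrix (Fin dA) (Fin dA) ℂ) ⊗ₖ 1) * ρAB)
          * invSqrt (trA ρAB) = 1
      rw [Matrix.one_kronecker_one, Matrix.one_mul, hC]
      have hfin : hρB.sqrt⁻¹ * (hρB.sqrt * hρB.sqrt) * hρB.sqrt⁻¹ = 1 := by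
        rw [← Matrix.mul_assoc, Matrix.nonsing_inv_mul _ hdets,
          Matrix.one_mul, Matrix.mul_nonsing_inv _ hdets]
      rw [hsq] at hfin
      exact hfin
  · intro x a
    rw [hsim x a]
    have : ∀ A, SEO ρAB A = seoLin ρAB A := fun _ => rfl
    simp only [this, map_sum, LinearMap.map_smul]
end
end

section
/- Let {M_{a|x}}_{a,x} be a measurement assemblage on ℂ^d and define the symmetrized operators M̃^k_{a|x} = (1/k) Σ_{ℓ=0}^{k-1} 𝟙^{⊗ℓ} ⊗ M_{a|x} ⊗ 𝟙^{⊗(k-ℓ-1)} on (ℂ^d)^{⊗k}. If {M_{a|x}}_{a,x} is k-compatible with a k-copy joint observable of product form, then the assemblage {M̃^k_{a|x}}_{a,x} is jointly measurable with a joint observable each of whose effects is fully separable across the k tensor factors (i.e., each effect is a finite sum of tensor products of k positive semidefinite matrices). -/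
open Matrix BigOperators
open scoped Kronecker ComplexOrder

noncomputable section

/-- The `k`-fold tensor power of a `d × d` matrix, realized on the index type `Fin k → Fin d`. -/
def tpow {d : ℕ} (k : ℕ) (ρ : Matrix (Fin d) (Fin d) ℂ) :
    Matrix (Fin k → Fin d) (Fin k → Fin d) ℂ :=
  Matrix.of fun f g => ∏ y, ρ (f y) (g y)

/-- The tensor product `A 0 ⊗ A 1 ⊗ ⋯ ⊗ A (k-1)` of a `k`-tuple of `d × d` matrices. -/
def prodOp {d k : ℕ} (A : Fin k → Matrix (Fin d) (Fin d) ℂ) :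
    Matrix (Fin k → Fin d) (Fin k → Fin d) ℂ :=
  Matrix.of fun f g => ∏ y, A y (f y) (g y)

/-- `k`-compatibility with a `k`-copy joint observable of product form:
there are `k` POVMs `B y` and a post-processing `r` such that
`tr[ρ M_{a|x}] = ∑_b r(a|x,b) tr[ρ^{⊗k} (B_{b₁|1} ⊗ ⋯ ⊗ B_{b_k|k})]` for all states `ρ`. -/
def KCompatibleProd {d na nx : ℕ} (k : ℕ)
    (M : Fin nx → Fin na → Matrix (Fin d) (Fin d) ℂ) : Prop :=
  ∃ (nb : ℕ) (B : Fin k → Fin nb → Matrix (Fin d) (Fin d) ℂ)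
    (r : Fin nx → (Fin k → Fin nb) → Fin na → ℝ),
    (∀ y, IsPOVM (B y)) ∧
    (∀ x b a, 0 ≤ r x b a) ∧ (∀ x b, ∑ a, r x b a = 1) ∧
    ∀ ρ : Matrix (Fin d) (Fin d) ℂ, IsDensity ρ → ∀ x a,
      (ρ * M x a).trace =
        ∑ b : Fin k → Fin nb, r x b a • (tpow k ρ * prodOp fun y => B y (b y)).trace

/-- The operator `𝟙^{⊗ℓ} ⊗ A ⊗ 𝟙^{⊗(k-ℓ-1)}` acting on `k` tensor factors. -/
def embedAt {d k : ℕ} (ℓ : Fin k) (A : Matrix (Fin d) (Fin d) ℂ) :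
    Matrix (Fin k → Fin d) (Fin k → Fin d) ℂ :=
  prodOp fun y => if y = ℓ then A else 1

/-- The symmetrized operator `M̃^k = (1/k) ∑_{ℓ=0}^{k-1} 𝟙^{⊗ℓ} ⊗ M ⊗ 𝟙^{⊗(k-ℓ-1)}`. -/
def symmetrize {d : ℕ} (k : ℕ) (A : Matrix (Fin d) (Fin d) ℂ) :
    Matrix (Fin k → Fin d) (Fin k → Fin d) ℂ :=
  (k : ℂ)⁻¹ • ∑ ℓ, embedAt ℓ A

/-- Full separability across the `k` tensor factors: a finite sum of tensor products of
`k` positive semidefinite matrices. -/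
def FullySep {d k : ℕ} (X : Matrix (Fin k → Fin d) (Fin k → Fin d) ℂ) : Prop :=
  ∃ (m : ℕ) (A : Fin m → Fin k → Matrix (Fin d) (Fin d) ℂ),
    (∀ i y, (A i y).PosSemidef) ∧ X = ∑ i, prodOp (A i)


/-! ### Auxiliary machinery -/

namespace SymAux4

variable {d k : ℕ}

local notation "Mat" => Matrix (Fin d) (Fin d) ℂ

lemma prodOp_apply (A : Fin k → Mat) (f g : Fin k → Fin d) :
    prodOp A f g = ∏ y, A y (f y) (g y) := rfl

lemma tpow_eq (ρ : Mat) : tpow k ρ = prodOp (fun _ => ρ) := rfl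

lemma prodOp_mul (A C : Fin k → Mat) :
    prodOp A * prodOp C = prodOp (fun y => A y * C y) := by
  ext f g
  simp only [Matrix.mul_apply, prodOp, Matrix.of_apply, ← Finset.prod_mul_distrib]
  rw [Fintype.prod_sum (f := fun y j => A y (f y) j * C y j (g y))]

lemma trace_prodOp (A : Fin k → Mat) : (prodOp A).trace = ∏ y, (A y).trace := by
  simp only [Matrix.trace, Matrix.diag, prodOp, Matrix.of_apply]
  rw [Fintype.prod_sum (f := fun y j => A y j j)]

lemma prodOp_conjTranspose (A : Fin k → Mat) :
    (prodOp A)ᴴ = prodOp (fun y => (A y)ᴴ) := by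
  ext f g
  simp [prodOp, Matrix.conjTranspose_apply, star_prod]

open scoped MatrixOrder in
lemma prodOp_posSemidef {A : Fin k → Mat} (h : ∀ y, (A y).PosSemidef) :
    (prodOp A).PosSemidef := by
  choose C hC using fun y => CStarAlgebra.nonneg_iff_eq_star_mul_self.mp (h y).nonneg
  have hA : prodOp A = (prodOp C)ᴴ * prodOp C := by
    rw [prodOp_conjTranspose, prodOp_mul]
    exact congrArg prodOp (funext hC)
  rw [hA]
  exact Matrix.posSemidef_conjTranspose_mul_self _

lemma posSemidef_real_smul {m : Type*} [Fintype m] {A : Matrix m m ℂ} (hA : A.PosSemidef)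
    {c : ℝ} (hc : 0 ≤ c) : ((c : ℂ) • A).PosSemidef := by
  constructor
  · show ((c : ℂ) • A)ᴴ = (c : ℂ) • A
    rw [Matrix.conjTranspose_smul, hA.1.eq]
    congr 1
    exact Complex.conj_ofReal c
  · exact (hA.smul (Complex.zero_le_real.mpr hc)).2

lemma posSemidef_sum {ι : Type*} [DecidableEq ι] (s : Finset ι) (v : ι → Mat)
    (h : ∀ i ∈ s, (v i).PosSemidef) : (∑ i ∈ s, v i).PosSemidef := by
  induction s using Finset.induction_on with
  | empty => simpa using Matrix.PosSemidef.zero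
  | insert _ _ hnot ih =>
    rw [Finset.sum_insert hnot]
    exact Matrix.PosSemidef.add (h _ (Finset.mem_insert_self _ _))
      (ih fun i hi => h i (Finset.mem_insert_of_mem hi))

/-- rank-one outer product -/
def outer (u : Fin d → ℂ) : Mat := Matrix.of fun i j => u i * (starRingEnd ℂ) (u j)

lemma outer_posSemidef (u : Fin d → ℂ) : (outer u).PosSemidef := by
  have h : outer u = (Matrix.of fun (i : Fin d) (_ : Fin 1) => u i) *
      (Matrix.of fun (i : Fin d) (_ : Fin 1) => u i)ᴴ := by
    ext i j
    simp [outer, Matrix.mul_apply, Matrix.conjTranspose_apply]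
  rw [h]
  exact Matrix.posSemidef_self_mul_conjTranspose _

lemma stdBasisMatrix_mem_span (p q : Fin d) :
    Matrix.single p q (1 : ℂ) ∈
      Submodule.span ℂ {A : Mat | A.PosSemidef} := by
  have hmem : ∀ u : Fin d → ℂ, outer u ∈ Submodule.span ℂ {A : Mat | A.PosSemidef} :=
    fun u => Submodule.subset_span (outer_posSemidef u)
  by_cases hpq : p = q
  · subst hpq
    have h : Matrix.single p p (1 : ℂ) = outer (Pi.single p 1) := by
      ext i j
      simp only [Matrix.single, Matrix.of_apply, outer, Pi.single_apply,
        apply_ite (starRingEnd ℂ), RingHom.map_one, RingHom.map_zero, ite_and]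
      split_ifs <;> subst_vars <;> simp_all
    rw [h]; exact hmem _
  · have key : Matrix.single p q (1 : ℂ)
        = (2⁻¹ : ℂ) • outer (Pi.single p 1 + Pi.single q 1)
          + (Complex.I * 2⁻¹) • outer (Pi.single p 1 + Pi.single q Complex.I)
          + (-(1 + Complex.I) * 2⁻¹) • outer (Pi.single p 1)
          + (-(1 + Complex.I) * 2⁻¹) • outer (Pi.single q 1) := by
      ext i j
      simp only [Matrix.single, Matrix.of_apply, outer, Matrix.add_apply,
        Matrix.smul_apply, Pi.add_apply, Pi.single_apply, smul_eq_mul, _root_.map_add, ite_and,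
        apply_ite (starRingEnd ℂ), RingHom.map_one, RingHom.map_zero, Complex.conj_I]
      split_ifs <;> subst_vars <;>
        first
          | (exfalso; exact hpq rfl)
          | (exfalso; exact absurd rfl ‹_›)
          | (norm_num [pow_succ, Complex.I_sq, Complex.ext_iff]; try ring1)
          | ring1
    rw [key]
    refine Submodule.add_mem _ (Submodule.add_mem _ (Submodule.add_mem _ ?_ ?_) ?_) ?_ <;>
      exact Submodule.smul_mem _ _ (hmem _)

lemma span_posSemidef_eq_top :
    Submodule.span ℂ {A : Mat | A.PosSemidef} = ⊤ := by
  rw [eq_top_iff]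
  rintro A -
  rw [Matrix.matrix_eq_sum_single A]
  refine Submodule.sum_mem _ fun p _ => Submodule.sum_mem _ fun q _ => ?_
  have h : Matrix.single p q (A p q) = A p q • Matrix.single p q (1 : ℂ) := by
    ext i j
    simp only [Matrix.single, Matrix.of_apply, Matrix.smul_apply, smul_eq_mul]
    split <;> simp
  rw [h]
  exact Submodule.smul_mem _ _ (stdBasisMatrix_mem_span p q)

lemma prodOp_update_apply [DecidableEq (Fin k)] (A : Fin k → Mat) (y0 : Fin k) (P : Mat) (f g : Fin k → Fin d) :
    prodOp (Function.update A y0 P) f g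
      = P (f y0) (g y0) * ∏ z ∈ Finset.univ \ {y0}, A z (f z) (g z) := by
  have h : (fun z => (Function.update A y0 P) z (f z) (g z))
      = Function.update (fun z => A z (f z) (g z)) y0 (P (f y0) (g y0)) := by
    funext z
    by_cases hz : z = y0
    · subst hz; simp
    · simp [Function.update_of_ne hz]
  show ∏ z, (Function.update A y0 P) z (f z) (g z) = _
  rw [h, Finset.prod_update_of_mem (Finset.mem_univ y0)]

lemma prodOp_update_add [DecidableEq (Fin k)] (v : Fin k → Mat) (y0 : Fin k) (P Q : Mat) :
    prodOp (Function.update v y0 (P + Q))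
      = prodOp (Function.update v y0 P) + prodOp (Function.update v y0 Q) := by
  ext f g
  simp [prodOp_update_apply, Matrix.add_apply, add_mul]

lemma prodOp_update_smul [DecidableEq (Fin k)] (v : Fin k → Mat) (y0 : Fin k) (c : ℂ) (P : Mat) :
    prodOp (Function.update v y0 (c • P)) = c • prodOp (Function.update v y0 P) := by
  ext f g
  simp [prodOp_update_apply, Matrix.smul_apply, mul_assoc]

/-- The multilinear functional `v ↦ tr(prodOp v * X)`. -/
def Phi (X : Matrix (Fin k → Fin d) (Fin k → Fin d) ℂ) :
    MultilinearMap ℂ (fun _ : Fin k => Mat) ℂ where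
  toFun v := (prodOp v * X).trace
  map_update_add' := by
    intro inst v y0 P Q
    obtain rfl : inst = instDecidableEqFin k := Subsingleton.elim _ _
    rw [prodOp_update_add, Matrix.add_mul, Matrix.trace_add]
  map_update_smul' := by
    intro inst v y0 c P
    obtain rfl : inst = instDecidableEqFin k := Subsingleton.elim _ _
    rw [prodOp_update_smul, Matrix.smul_mul, Matrix.trace_smul]

lemma Phi_apply (X : Matrix (Fin k → Fin d) (Fin k → Fin d) ℂ) (v : Fin k → Mat) :
    Phi X v = (prodOp v * X).trace := rfl


lemma coeff_sum (h : Fin k → Fin k) :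
    ∑ s : Finset (Fin k), (if (∀ y, h y ∈ s) then ((-1:ℂ))^(k - s.card) else 0)
      = if Function.Bijective h then 1 else 0 := by
  classical
  set R : Finset (Fin k) := Finset.image h Finset.univ with hR
  rw [← Equiv.sum_comp (⟨compl, compl, compl_compl, compl_compl⟩ :
    Finset (Fin k) ≃ Finset (Fin k)) (fun s => if (∀ y, h y ∈ s) then ((-1:ℂ))^(k - s.card) else 0)]
  have hcard : ∀ t : Finset (Fin k), k - (tᶜ : Finset (Fin k)).card = t.card := by
    intro t
    rw [Finset.card_compl, Fintype.card_fin]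
    exact Nat.sub_sub_self ((Finset.card_le_univ t).trans_eq (by simp))
  have hcond : ∀ t : Finset (Fin k), (∀ y, h y ∈ (tᶜ : Finset (Fin k))) ↔ t ⊆ Rᶜ := by
    intro t
    constructor
    · intro H x hx
      rw [Finset.mem_compl]
      intro hxR
      obtain ⟨y, -, rfl⟩ := Finset.mem_image.mp hxR
      exact (Finset.mem_compl.mp (H y)) hx
    · intro H y
      rw [Finset.mem_compl]
      intro hyt
      have h2 := H hyt
      rw [Finset.mem_compl] at h2
      exact h2 (Finset.mem_image.mpr ⟨y, Finset.mem_univ y, rfl⟩)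
  have step1 : ∀ t : Finset (Fin k),
      (if (∀ y, h y ∈ (tᶜ : Finset (Fin k))) then ((-1:ℂ))^(k - (tᶜ : Finset (Fin k)).card) else 0)
      = (if t ∈ (Rᶜ : Finset (Fin k)).powerset then ((-1:ℂ))^t.card else 0) := by
    intro t
    rw [hcard t]
    exact if_congr ((hcond t).trans (Finset.mem_powerset).symm) rfl rfl
  simp only [Equiv.coe_fn_mk]
  rw [Finset.sum_congr rfl fun t (_ : t ∈ Finset.univ) => step1 t]
  rw [Finset.sum_ite_mem, Finset.univ_inter]
  have hpa := Finset.prod_add (fun _ : Fin k => (-1:ℂ)) (fun _ => 1) (Rᶜ)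
  simp only [neg_add_cancel, Finset.prod_const, one_pow, mul_one] at hpa
  rw [← hpa, zero_pow_eq]
  refine if_congr ?_ rfl rfl
  rw [Finset.card_eq_zero, Finset.compl_eq_empty_iff]
  constructor
  · intro hRuniv
    refine (Finite.surjective_iff_bijective).mp ?_
    intro x
    have hx : x ∈ R := hRuniv ▸ Finset.mem_univ x
    obtain ⟨y, -, hy⟩ := Finset.mem_image.mp hx
    exact ⟨y, hy⟩
  · intro hb
    refine Finset.eq_univ_of_forall fun x => ?_
    obtain ⟨y, hy⟩ := hb.2 x
    exact Finset.mem_image.mpr ⟨y, Finset.mem_univ y, hy⟩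

lemma perm_sum_vanish_psd (Φ : MultilinearMap ℂ (fun _ : Fin k => Mat) ℂ)
    (h0 : ∀ ρ : Mat, ρ.PosSemidef → Φ (fun _ => ρ) = 0)
    (v : Fin k → Mat) (hv : ∀ i, (v i).PosSemidef) :
    ∑ σ : Equiv.Perm (Fin k), Φ (fun y => v (σ y)) = 0 := by
  classical
  have hdiag : ∀ s : Finset (Fin k), Φ (fun _ => ∑ i ∈ s, v i) = 0 :=
    fun s => h0 _ (posSemidef_sum s v fun i _ => hv i)
  have hexp : ∀ s : Finset (Fin k),
      (0:ℂ) = ∑ h ∈ Fintype.piFinset (fun _ : Fin k => s), Φ (fun y => v (h y)) := by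
    intro s
    rw [← hdiag s]
    exact Φ.map_sum_finset (fun _ j => v j) (fun _ => s)
  have inner : ∀ s : Finset (Fin k),
      ∑ h ∈ Fintype.piFinset (fun _ : Fin k => s), Φ (fun y => v (h y))
        = ∑ h : Fin k → Fin k, if (∀ y, h y ∈ s) then Φ (fun y => v (h y)) else 0 := by
    intro s
    have hfilter : Fintype.piFinset (fun _ : Fin k => s)
        = Finset.univ.filter (fun h : Fin k → Fin k => ∀ y, h y ∈ s) := by
      ext h
      simp [Fintype.mem_piFinset]
    rw [hfilter, Finset.sum_filter]
  have key : (0:ℂ) = ∑ s : Finset (Fin k), ((-1:ℂ))^(k - s.card)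
      * ∑ h ∈ Fintype.piFinset (fun _ : Fin k => s), Φ (fun y => v (h y)) := by
    simp [← hexp]
  have swap : ∑ s : Finset (Fin k), ((-1:ℂ))^(k - s.card)
      * ∑ h ∈ Fintype.piFinset (fun _ : Fin k => s), Φ (fun y => v (h y))
      = ∑ h : Fin k → Fin k,
          (∑ s : Finset (Fin k), if (∀ y, h y ∈ s) then ((-1:ℂ))^(k - s.card) else 0)
            * Φ (fun y => v (h y)) := by
    rw [Finset.sum_congr rfl (fun s (_ : s ∈ Finset.univ) => by rw [inner s, Finset.mul_sum])]
    rw [Finset.sum_comm]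
    refine Finset.sum_congr rfl fun h _ => ?_
    rw [Finset.sum_mul]
    refine Finset.sum_congr rfl fun s _ => ?_
    rw [mul_ite, mul_zero, ite_mul, zero_mul]
  have coeffs : ∑ h : Fin k → Fin k,
      (∑ s : Finset (Fin k), if (∀ y, h y ∈ s) then ((-1:ℂ))^(k - s.card) else 0)
        * Φ (fun y => v (h y))
      = ∑ h : Fin k → Fin k,
          if Function.Bijective h then Φ (fun y => v (h y)) else 0 := by
    refine Finset.sum_congr rfl fun h _ => ?_
    rw [coeff_sum h, ite_mul, zero_mul, one_mul]
  have tobij : ∑ h : Fin k → Fin k,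
      (if Function.Bijective h then Φ (fun y => v (h y)) else 0)
      = ∑ σ : Equiv.Perm (Fin k), Φ (fun y => v (σ y)) := by
    rw [← Finset.sum_filter]
    refine (Finset.sum_bij (fun (σ : Equiv.Perm (Fin k)) (_ : σ ∈ Finset.univ) => (σ : Fin k → Fin k))
      ?_ ?_ ?_ ?_).symm
    · intro σ _
      exact Finset.mem_filter.mpr ⟨Finset.mem_univ _, σ.bijective⟩
    · intro σ1 _ σ2 _ hcoe
      exact Equiv.coe_fn_injective hcoe
    · intro h hh
      rw [Finset.mem_filter] at hh
      exact ⟨Equiv.ofBijective h hh.2, Finset.mem_univ _, rfl⟩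
    · intro σ _
      rfl
  rw [← tobij, ← coeffs, ← swap, ← key]

lemma perm_sum_vanish_all (Φ : MultilinearMap ℂ (fun _ : Fin k => Mat) ℂ)
    (h0 : ∀ ρ : Mat, ρ.PosSemidef → Φ (fun _ => ρ) = 0)
    (v : Fin k → Mat) :
    ∑ σ : Equiv.Perm (Fin k), Φ (fun y => v (σ y)) = 0 := by
  classical
  set Ψ : MultilinearMap ℂ (fun _ : Fin k => Mat) ℂ :=
    ∑ σ : Equiv.Perm (Fin k), Φ.domDomCongr σ with hΨdef
  have hΨapp : ∀ w : Fin k → Mat, Ψ w = ∑ σ : Equiv.Perm (Fin k), Φ (fun y => w (σ y)) := by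
    intro w
    rw [hΨdef, MultilinearMap.sum_apply]
    rfl
  have H : ∀ j : ℕ, ∀ w : Fin k → Mat, (∀ i : Fin k, j ≤ (i:ℕ) → (w i).PosSemidef) → Ψ w = 0 := by
    intro j
    induction j with
    | zero =>
      intro w hw
      rw [hΨapp]
      exact perm_sum_vanish_psd Φ h0 w fun i => hw i (Nat.zero_le _)
    | succ j ih =>
      intro w hw
      by_cases hj : j < k
      · set i0 : Fin k := ⟨j, hj⟩ with hi0
        have hspan : w i0 ∈ Submodule.span ℂ {A : Mat | A.PosSemidef} := by
          rw [span_posSemidef_eq_top]; exact Submodule.mem_top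
        have main : ∀ P, P ∈ Submodule.span ℂ {A : Mat | A.PosSemidef} →
            Ψ (Function.update w i0 P) = 0 := by
          intro P0 hP0
          induction hP0 using Submodule.span_induction with
          | mem P hP =>
            apply ih
            intro i hi
            by_cases hii : i = i0
            · subst hii
              simpa using hP
            · rw [Function.update_of_ne hii]
              refine hw i ?_
              rcases lt_or_eq_of_le hi with h' | h'
              · exact h'
              · exact absurd (Fin.ext h'.symm) hii
          | zero => exact Ψ.map_update_zero w i0
          | add x y hx hy ihx ihy => rw [Ψ.map_update_add, ihx, ihy, add_zero]
          | smul c x hx ihx => rw [Ψ.map_update_smul, ihx, smul_zero]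
        have main2 := main (w i0) hspan
        rwa [Function.update_eq_self] at main2
      · exact ih w fun i hi => absurd (lt_of_lt_of_le i.isLt (not_lt.mp hj)) (not_lt.mpr hi)
  have hfin := H k v fun i hi => absurd hi (not_le.mpr i.isLt)
  rwa [hΨapp] at hfin

def EBig (f g : Fin k → Fin d) : Matrix (Fin k → Fin d) (Fin k → Fin d) ℂ :=
  Matrix.of fun f' g' => if f = f' ∧ g = g' then 1 else 0

lemma prodOp_stdBasis (f g : Fin k → Fin d) :
    prodOp (fun y => Matrix.single (f y) (g y) (1:ℂ)) = EBig f g := by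
  ext f' g'
  simp only [prodOp, Matrix.of_apply, EBig, Matrix.single]
  rw [Fintype.prod_boole]
  simp [funext_iff, forall_and]

lemma trace_EBig_mul (f g : Fin k → Fin d) (X : Matrix (Fin k → Fin d) (Fin k → Fin d) ℂ) :
    (EBig f g * X).trace = X g f := by
  simp only [Matrix.trace, Matrix.diag, Matrix.mul_apply, EBig, Matrix.of_apply, ite_and,
    ite_mul, zero_mul, one_mul]
  simp [Finset.sum_ite_eq]

lemma perm_entry_sum_eq_zero {X : Matrix (Fin k → Fin d) (Fin k → Fin d) ℂ}
    (hX : ∀ ρ : Mat, ρ.PosSemidef → (tpow k ρ * X).trace = 0)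
    (f g : Fin k → Fin d) :
    ∑ σ : Equiv.Perm (Fin k), X (fun z => g (σ z)) (fun z => f (σ z)) = 0 := by
  have h0 : ∀ ρ : Mat, ρ.PosSemidef → Phi X (fun _ => ρ) = 0 := fun ρ hρ => hX ρ hρ
  have hv := perm_sum_vanish_all (Phi X) h0
    (fun y => Matrix.single (f y) (g y) (1:ℂ))
  rw [← hv]
  refine Finset.sum_congr rfl fun σ _ => ?_
  rw [Phi_apply]
  rw [show prodOp (fun y => Matrix.single (f (σ y)) (g (σ y)) (1:ℂ))
        = EBig (fun z => f (σ z)) (fun z => g (σ z)) from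
      prodOp_stdBasis (fun z => f (σ z)) (fun z => g (σ z))]
  rw [trace_EBig_mul]


lemma tpow_smul (c : ℂ) (ρ : Mat) : tpow k (c • ρ) = c^k • tpow k ρ := by
  ext f g
  simp only [tpow, Matrix.of_apply, Matrix.smul_apply, smul_eq_mul, Finset.prod_mul_distrib,
    Finset.prod_const, Finset.card_univ, Fintype.card_fin]

lemma tpow_zero (hk : 0 < k) : tpow k (0 : Mat) = 0 := by
  ext f g
  simp only [tpow, Matrix.of_apply, Matrix.zero_apply, Finset.prod_const, Finset.card_univ,
    Fintype.card_fin]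
  exact zero_pow hk.ne'

lemma trace_tpow_mul_embedAt (ρ : Mat) (ℓ : Fin k) (A : Mat) :
    (tpow k ρ * embedAt ℓ A).trace = (ρ * A).trace * ρ.trace ^ (k - 1) := by
  rw [tpow_eq, embedAt, prodOp_mul, trace_prodOp]
  have hfun : (fun y : Fin k => (ρ * if y = ℓ then A else (1:Mat)).trace)
      = Function.update (fun _ : Fin k => ρ.trace) ℓ ((ρ * A).trace) := by
    funext y
    by_cases hy : y = ℓ
    · subst hy; simp
    · simp [hy, Function.update_of_ne hy, Matrix.mul_one]
  rw [show (∏ y, (ρ * if y = ℓ then A else (1:Mat)).trace)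
      = ∏ y, Function.update (fun _ : Fin k => ρ.trace) ℓ ((ρ * A).trace) y from by rw [← hfun]]
  rw [Finset.prod_update_of_mem (Finset.mem_univ ℓ), Finset.prod_const]
  congr 1
  rw [Finset.card_sdiff_of_subset (Finset.singleton_subset_iff.mpr (Finset.mem_univ ℓ)),
    Finset.card_univ, Fintype.card_fin, Finset.card_singleton]

lemma sum_prodOp_one {nb : ℕ} (C : Fin k → Fin nb → Mat) (hC : ∀ y, ∑ j, C y j = 1) :
    ∑ c : Fin k → Fin nb, prodOp (fun y => C y (c y)) = 1 := by
  ext f g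
  simp only [Matrix.sum_apply, prodOp, Matrix.of_apply]
  rw [← Fintype.prod_sum (f := fun y j => C y j (f y) (g y))]
  have h1 : ∀ y : Fin k, (∑ j, C y j (f y) (g y)) = (1 : Mat) (f y) (g y) := by
    intro y
    rw [← Matrix.sum_apply, hC y]
  rw [Finset.prod_congr rfl fun y _ => h1 y]
  simp only [Matrix.one_apply]
  rw [Fintype.prod_boole]
  simp [funext_iff]

lemma prodOp_comp_apply (C : Fin k → Mat) (σ : Equiv.Perm (Fin k)) (f g : Fin k → Fin d) :
    prodOp C (fun z => f (σ z)) (fun z => g (σ z)) = prodOp (fun z => C (σ.symm z)) f g := by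
  show ∏ y, C y (f (σ y)) (g (σ y)) = ∏ z, C (σ.symm z) (f z) (g z)
  rw [← Equiv.prod_comp σ (fun z => C (σ.symm z) (f z) (g z))]
  exact Finset.prod_congr rfl fun y _ => by rw [Equiv.symm_apply_apply]

lemma embedAt_comp_apply (ℓ : Fin k) (A : Mat) (σ : Equiv.Perm (Fin k)) (f g : Fin k → Fin d) :
    embedAt ℓ A (fun z => f (σ z)) (fun z => g (σ z)) = embedAt (σ ℓ) A f g := by
  rw [embedAt, prodOp_comp_apply]
  show prodOp _ f g = prodOp _ f g
  congr 1
  funext z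
  by_cases hz : z = σ ℓ
  · subst hz
    simp
  · rw [if_neg hz, if_neg]
    intro hcon
    exact hz ((Equiv.symm_apply_eq σ).mp hcon)

lemma symmetrize_comp_apply (A : Mat) (σ : Equiv.Perm (Fin k)) (f g : Fin k → Fin d) :
    symmetrize k A (fun z => f (σ z)) (fun z => g (σ z)) = symmetrize k A f g := by
  simp only [symmetrize, Matrix.smul_apply, Matrix.sum_apply]
  congr 1
  rw [← Equiv.sum_comp σ (fun ℓ => embedAt ℓ A f g)]
  exact Finset.sum_congr rfl fun ℓ _ => embedAt_comp_apply ℓ A σ f g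

lemma psd_diag_nonneg {n : ℕ} {A : Matrix (Fin n) (Fin n) ℂ} (hA : A.PosSemidef) (i : Fin n) :
    0 ≤ A i i := by
  have h := hA.dotProduct_mulVec_nonneg (Pi.single i 1)
  simpa [Matrix.mulVec_single, dotProduct, Pi.single_apply, Finset.sum_ite_eq,
    apply_ite (starRingEnd ℂ)] using h

lemma psd_trace_nonneg {n : ℕ} {A : Matrix (Fin n) (Fin n) ℂ} (hA : A.PosSemidef) :
    0 ≤ A.trace :=
  Finset.sum_nonneg fun i _ => psd_diag_nonneg hA i

lemma psd_trace_zero {n : ℕ} {A : Matrix (Fin n) (Fin n) ℂ} (hA : A.PosSemidef)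
    (h : A.trace = 0) : A = 0 := by
  have hdiag : ∀ i, A i i = 0 := by
    intro i
    exact (Finset.sum_eq_zero_iff_of_nonneg fun j _ => psd_diag_nonneg hA j).mp h i
      (Finset.mem_univ i)
  have hcol : ∀ j, A *ᵥ Pi.single j 1 = 0 := by
    intro j
    refine (hA.dotProduct_mulVec_zero_iff (Pi.single j 1)).mp ?_
    have h2 : star (Pi.single j (1:ℂ)) ⬝ᵥ A *ᵥ Pi.single j 1 = A j j := by
      simp [Matrix.mulVec_single, dotProduct, Pi.single_apply, Finset.sum_ite_eq,
        apply_ite (starRingEnd ℂ)]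
    rw [h2, hdiag j]
  ext i j
  have h3 := congrFun (hcol j) i
  simpa [Matrix.mulVec_single] using h3

end SymAux4

/-- if `M` is `k`-compatible with a product-form `k`-copy joint observable,
then the symmetrized assemblage `M̃^k` is jointly measurable with a joint observable all
of whose effects are fully separable. -/
theorem symmetrized_jointly_measurable_of_kCompatibleProd
    {d na nx : ℕ} (k : ℕ) (hk : 0 < k)
    (M : Fin nx → Fin na → Matrix (Fin d) (Fin d) ℂ)
    (hM : ∀ x, IsPOVM (M x))
    (hcomp : KCompatibleProd k M) :
    ∃ (nl : ℕ) (G : Fin nl → Matrix (Fin k → Fin d) (Fin k → Fin d) ℂ)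
      (p : Fin nx → Fin nl → Fin na → ℝ),
      IsPOVM G ∧
      (∀ l, FullySep (G l)) ∧
      (∀ x l a, 0 ≤ p x l a) ∧ (∀ x l, ∑ a, p x l a = 1) ∧
      ∀ x a, symmetrize k (M x a) = ∑ l, p x l a • G l := by
  classical
  obtain ⟨nb, B, r, hBpovm, hrnn, hrsum, htr⟩ := hcomp
  set e : Fin (Fintype.card (Equiv.Perm (Fin k) × (Fin k → Fin nb)))
      ≃ Equiv.Perm (Fin k) × (Fin k → Fin nb) :=
    (Fintype.equivFin (Equiv.Perm (Fin k) × (Fin k → Fin nb))).symm with he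
  have hfacne : ((k.factorial : ℂ)) ≠ 0 := Nat.cast_ne_zero.mpr (Nat.factorial_ne_zero k)
  have hinvnn : (0:ℝ) ≤ ((k.factorial : ℝ))⁻¹ :=
    inv_nonneg.mpr (Nat.cast_nonneg _)
  have hfacne' : (((k.factorial : ℝ)) : ℂ) ≠ 0 := by
    simpa using hfacne
  refine ⟨Fintype.card (Equiv.Perm (Fin k) × (Fin k → Fin nb)),
    fun l => (((k.factorial : ℝ))⁻¹ : ℂ) •
      prodOp (fun y => B ((e l).1 y) ((e l).2 ((e l).1 y))),
    fun x l a => r x (e l).2 a, ⟨?_, ?_⟩, ?_, ?_, ?_, ?_⟩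
  · -- each effect PSD
    intro l
    rw [← Complex.ofReal_inv]
    exact SymAux4.posSemidef_real_smul
      (SymAux4.prodOp_posSemidef (A := fun y => B ((e l).1 y) ((e l).2 ((e l).1 y)))
        fun y => (hBpovm ((e l).1 y)).1 ((e l).2 ((e l).1 y))) hinvnn
  · -- sum to identity
    rw [Fintype.sum_equiv e
      (fun l => (((k.factorial : ℝ))⁻¹ : ℂ) •
        prodOp (fun y => B ((e l).1 y) ((e l).2 ((e l).1 y))))
      (fun pr => (((k.factorial : ℝ))⁻¹ : ℂ) •
        prodOp (fun y => B (pr.1 y) (pr.2 (pr.1 y)))) (fun l => rfl)]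
    rw [Fintype.sum_prod_type]
    have hinner : ∀ σ : Equiv.Perm (Fin k),
        ∑ b : Fin k → Fin nb, prodOp (fun y => B (σ y) (b (σ y))) = 1 := by
      intro σ
      rw [Fintype.sum_equiv
        (⟨fun c y => c (σ y), fun c y => c (σ.symm y),
          fun c => funext fun y => by simp, fun c => funext fun y => by simp⟩ :
          (Fin k → Fin nb) ≃ (Fin k → Fin nb))
        (fun b => prodOp (fun y => B (σ y) (b (σ y))))
        (fun c => prodOp (fun y => B (σ y) (c y))) (fun b => rfl)]
      exact SymAux4.sum_prodOp_one (fun y => B (σ y)) (fun y => (hBpovm (σ y)).2)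
    rw [Finset.sum_congr rfl fun σ (_ : σ ∈ Finset.univ) => by
      rw [← Finset.smul_sum, hinner σ]]
    rw [Finset.sum_const, Finset.card_univ, Fintype.card_perm, Fintype.card_fin]
    rw [← Nat.cast_smul_eq_nsmul ℂ, smul_smul]
    push_cast
    rw [mul_inv_cancel₀ hfacne, one_smul]
  · -- fully separable
    intro l
    refine ⟨1, fun _ => Function.update
      (fun y => B ((e l).1 y) ((e l).2 ((e l).1 y))) ⟨0, hk⟩
      ((((k.factorial : ℝ))⁻¹ : ℂ) •
        B ((e l).1 ⟨0, hk⟩) ((e l).2 ((e l).1 ⟨0, hk⟩))), ?_, ?_⟩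
    · intro i y
      by_cases hy : y = ⟨0, hk⟩
      · subst hy
        simp only [Function.update_self]
        rw [← Complex.ofReal_inv]
        exact SymAux4.posSemidef_real_smul ((hBpovm _).1 _) hinvnn
      · simp only [Function.update_of_ne hy]
        exact (hBpovm _).1 _
    · rw [Fin.sum_univ_one, SymAux4.prodOp_update_smul, Function.update_eq_self]
  · exact fun x l a => hrnn x _ a
  · exact fun x l => hrsum x _
  · -- the main identity
    intro x a
    set T : Matrix (Fin k → Fin d) (Fin k → Fin d) ℂ :=
      ∑ b : Fin k → Fin nb, (r x b a : ℂ) • prodOp (fun y => B y (b y)) with hT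
    have htrace : ∀ ρ : Matrix (Fin d) (Fin d) ℂ, ρ.PosSemidef →
        (tpow k ρ * (symmetrize k (M x a) - T)).trace = 0 := by
      intro ρ hρ
      rw [Matrix.mul_sub, Matrix.trace_sub, sub_eq_zero]
      by_cases hρ0 : ρ = 0
      · subst hρ0
        rw [SymAux4.tpow_zero hk]
        simp
      · have htnn : (0:ℂ) ≤ ρ.trace := SymAux4.psd_trace_nonneg hρ
        have htne : ρ.trace ≠ 0 := fun h0 => hρ0 (SymAux4.psd_trace_zero hρ h0)
        obtain ⟨t, ht, htpos⟩ : ∃ t : ℝ, ρ.trace = (t:ℂ) ∧ 0 < t := by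
          obtain ⟨h1, h2⟩ := Complex.nonneg_iff.mp htnn
          have him : ρ.trace.im = 0 := h2.symm
          have hre : ρ.trace = ((ρ.trace.re : ℝ) : ℂ) := by
            conv_lhs => rw [← Complex.re_add_im ρ.trace]
            rw [him]
            simp
          refine ⟨ρ.trace.re, hre, ?_⟩
          rcases lt_or_eq_of_le h1 with h3 | h3
          · exact h3
          · exact absurd (by rw [hre, ← h3]; simp : ρ.trace = 0) htne
        have htc : (t:ℂ) ≠ 0 := by
          exact_mod_cast htpos.ne'
        have hcinv : (((t⁻¹ : ℝ)) : ℂ) = ((t:ℂ))⁻¹ := Complex.ofReal_inv t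
        have hdens : IsDensity ((((t⁻¹ : ℝ)) : ℂ) • ρ) := by
          refine ⟨SymAux4.posSemidef_real_smul hρ (inv_nonneg.mpr htpos.le), ?_⟩
          rw [Matrix.trace_smul, ht, smul_eq_mul, hcinv]
          exact inv_mul_cancel₀ htc
        have heq := htr _ hdens x a
        have hQ : (tpow k ρ * T).trace
            = ∑ b : Fin k → Fin nb, (r x b a : ℂ) *
              (tpow k ρ * prodOp fun y => B y (b y)).trace := by
          rw [hT, Matrix.mul_sum, Matrix.trace_sum]
          exact Finset.sum_congr rfl fun b _ => by
            rw [Matrix.mul_smul, Matrix.trace_smul, smul_eq_mul]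
        have hrhs : ∑ b : Fin k → Fin nb, r x b a •
              (tpow k ((((t⁻¹ : ℝ)) : ℂ) • ρ) * prodOp fun y => B y (b y)).trace
            = (((t:ℂ))⁻¹)^k * (tpow k ρ * T).trace := by
          rw [hQ, Finset.mul_sum]
          refine Finset.sum_congr rfl fun b _ => ?_
          rw [SymAux4.tpow_smul, Matrix.smul_mul, Matrix.trace_smul, smul_eq_mul,
            Complex.real_smul, hcinv]
          ring
        have hlhs : (((((t⁻¹ : ℝ)) : ℂ) • ρ) * M x a).trace
            = ((t:ℂ))⁻¹ * (ρ * M x a).trace := by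
          rw [Matrix.smul_mul, Matrix.trace_smul, smul_eq_mul, hcinv]
        rw [hlhs, hrhs] at heq
        have hkk : (t:ℂ)^k = (t:ℂ)^(k-1) * t := by
          conv_lhs => rw [show k = (k-1)+1 from (Nat.succ_pred_eq_of_pos hk).symm]
          rw [pow_succ]
        have hTt : (tpow k ρ * T).trace = (t:ℂ)^(k-1) * (ρ * M x a).trace := by
          calc (tpow k ρ * T).trace
              = ((t:ℂ)^k * (((t:ℂ))⁻¹)^k) * (tpow k ρ * T).trace := by
                rw [← mul_pow, mul_inv_cancel₀ htc, one_pow, one_mul]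
            _ = (t:ℂ)^k * ((((t:ℂ))⁻¹)^k * (tpow k ρ * T).trace) := by ring
            _ = (t:ℂ)^k * (((t:ℂ))⁻¹ * (ρ * M x a).trace) := by rw [← heq]
            _ = (t:ℂ)^(k-1) * (ρ * M x a).trace := by
                rw [hkk]
                field_simp
        have hkc : ((k:ℂ)) ≠ 0 := Nat.cast_ne_zero.mpr hk.ne'
        have hsymm : (tpow k ρ * symmetrize k (M x a)).trace
            = (t:ℂ)^(k-1) * (ρ * M x a).trace := by
          rw [symmetrize, Matrix.mul_smul, Matrix.trace_smul, smul_eq_mul,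
            Matrix.mul_sum, Matrix.trace_sum]
          rw [Finset.sum_congr rfl fun ℓ (_ : ℓ ∈ Finset.univ) =>
            SymAux4.trace_tpow_mul_embedAt ρ ℓ (M x a)]
          rw [Finset.sum_const, Finset.card_univ, Fintype.card_fin, nsmul_eq_mul, ht]
          rw [← mul_assoc, inv_mul_cancel₀ hkc, one_mul]
          ring
        rw [hsymm, hTt]
    have hkey : ∀ f g : Fin k → Fin d,
        (k.factorial : ℂ) * symmetrize k (M x a) f g
          = ∑ σ : Equiv.Perm (Fin k), ∑ b : Fin k → Fin nb,
              (r x b a : ℂ) * prodOp (fun y => B (σ y) (b (σ y))) f g := by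
      intro f g
      have h0 := SymAux4.perm_entry_sum_eq_zero htrace g f
      simp only [Matrix.sub_apply] at h0
      rw [Finset.sum_sub_distrib, sub_eq_zero] at h0
      have hS : ∑ σ : Equiv.Perm (Fin k),
          symmetrize k (M x a) (fun z => f (σ z)) (fun z => g (σ z))
          = (k.factorial : ℂ) * symmetrize k (M x a) f g := by
        rw [Finset.sum_congr rfl fun σ (_ : σ ∈ Finset.univ) =>
          SymAux4.symmetrize_comp_apply (M x a) σ f g]
        rw [Finset.sum_const, Finset.card_univ, Fintype.card_perm, Fintype.card_fin,
          nsmul_eq_mul]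
      have hper : ∀ σ : Equiv.Perm (Fin k), T (fun z => f (σ z)) (fun z => g (σ z))
          = ∑ b : Fin k → Fin nb, (r x b a : ℂ) *
              prodOp (fun z => B (σ.symm z) (b (σ.symm z))) f g := by
        intro σ
        rw [hT, Matrix.sum_apply]
        refine Finset.sum_congr rfl fun b _ => ?_
        rw [Matrix.smul_apply, smul_eq_mul, SymAux4.prodOp_comp_apply]
      rw [← hS, h0, Finset.sum_congr rfl fun σ (_ : σ ∈ Finset.univ) => hper σ]
      exact Fintype.sum_equiv
        (⟨fun σ : Equiv.Perm (Fin k) => σ.symm, fun σ => σ.symm,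
          fun σ => Equiv.symm_symm σ, fun σ => Equiv.symm_symm σ⟩ :
          Equiv.Perm (Fin k) ≃ Equiv.Perm (Fin k))
        _ _ (fun σ => rfl)
    ext f g
    rw [Matrix.sum_apply]
    rw [Fintype.sum_equiv e
      (fun l => (r x (e l).2 a • ((((k.factorial : ℝ))⁻¹ : ℂ) •
        prodOp (fun y => B ((e l).1 y) ((e l).2 ((e l).1 y))))) f g)
      (fun pr => (r x pr.2 a • ((((k.factorial : ℝ))⁻¹ : ℂ) •
        prodOp (fun y => B (pr.1 y) (pr.2 (pr.1 y))))) f g) (fun l => rfl)]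
    rw [Fintype.sum_prod_type]
    have hterm : ∀ (σ : Equiv.Perm (Fin k)) (b : Fin k → Fin nb),
        (r x b a • ((((k.factorial : ℝ))⁻¹ : ℂ) •
          prodOp (fun y => B (σ y) (b (σ y))))) f g
        = ((((k.factorial : ℝ)) : ℂ))⁻¹ *
            ((r x b a : ℂ) * prodOp (fun y => B (σ y) (b (σ y))) f g) := by
      intro σ b
      rw [Matrix.smul_apply, Matrix.smul_apply, Complex.real_smul, smul_eq_mul]
      ring
    rw [Finset.sum_congr rfl fun σ (_ : σ ∈ Finset.univ) =>
      Finset.sum_congr rfl fun b (_ : b ∈ Finset.univ) => hterm σ b]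
    rw [Finset.sum_congr rfl fun σ (_ : σ ∈ Finset.univ) =>
      (Finset.mul_sum _ _ _).symm]
    rw [← Finset.mul_sum, ← hkey f g, ← mul_assoc,
      show ((((k.factorial : ℝ)) : ℂ))⁻¹ * ((k.factorial : ℂ)) = 1 from by
        push_cast
        exact inv_mul_cancel₀ hfacne,
      one_mul]
end
end

section
/- Let {M_{a|x}}_{a,x} be a measurement assemblage on ℂ^{d} that is 2-compatible with a 2-copy joint observable {G_λ}_λ on ℂ^{d_A} ⊗ ℂ^{d_B} (d_A = d_B = d). If every effect G_λ lies in the linear span of the set { B_1 ⊗ 𝟙 + 𝟙 ⊗ B_2 : B_1, B_2 Hermitian matrices on ℂ^{d_A}, ℂ^{d_B} respectively }, then {M_{a|x}}_{a,x} is 2-simulable. -/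
open Matrix BigOperators
open scoped Kronecker ComplexOrder

noncomputable section

/-- `k`-simulability: the assemblage arises from `k` POVMs by classical pre- and
post-processing. -/
def KSimulable {d na nx : ℕ} (k : ℕ)
    (M : Fin nx → Fin na → Matrix (Fin d) (Fin d) ℂ) : Prop :=
  ∃ (nb : ℕ) (B : Fin k → Fin nb → Matrix (Fin d) (Fin d) ℂ)
    (p : Fin nx → Fin k → ℝ) (q : Fin nx → Fin k → Fin nb → Fin na → ℝ),
    (∀ y, IsPOVM (B y)) ∧
    (∀ x y, 0 ≤ p x y) ∧ (∀ x, ∑ y, p x y = 1) ∧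
    (∀ x y b a, 0 ≤ q x y b a) ∧ (∀ x y b, ∑ a, q x y b a = 1) ∧
    ∀ x a, M x a = ∑ y, p x y • ∑ b, q x y b a • B y b

namespace TwoSimAux

variable {d : ℕ}

/-- The linear extraction map sending `B₁ ⊗ 1 + 1 ⊗ B₂` to `B₁ + B₂`. -/
def Phi (d : ℕ) : Matrix (Fin d × Fin d) (Fin d × Fin d) ℂ →ₗ[ℂ] Matrix (Fin d) (Fin d) ℂ where
  toFun X := Matrix.of fun i j =>
    (d : ℂ)⁻¹ * ((∑ k, X (i, k) (j, k)) + ∑ k, X (k, i) (k, j))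
      - (d : ℂ)⁻¹ * (d : ℂ)⁻¹ * X.trace * (1 : Matrix (Fin d) (Fin d) ℂ) i j
  map_add' X Y := by
    ext i j
    by_cases h : i = j <;>
      simp [h, Matrix.trace, Matrix.diag, Finset.sum_add_distrib, Matrix.one_apply] <;> ring
  map_smul' c X := by
    ext i j
    by_cases h : i = j <;>
      simp [h, Matrix.trace, Matrix.diag, ← Finset.mul_sum, Matrix.one_apply, smul_eq_mul] <;>
      ring

lemma Phi_gen (hd : (d : ℂ) ≠ 0) (B₁ B₂ : Matrix (Fin d) (Fin d) ℂ) :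
    Phi d (B₁ ⊗ₖ (1 : Matrix (Fin d) (Fin d) ℂ) + (1 : Matrix (Fin d) (Fin d) ℂ) ⊗ₖ B₂)
      = B₁ + B₂ := by
  have htr : (B₁ ⊗ₖ (1 : Matrix (Fin d) (Fin d) ℂ)
      + (1 : Matrix (Fin d) (Fin d) ℂ) ⊗ₖ B₂).trace = (d : ℂ) * B₁.trace + (d : ℂ) * B₂.trace := by
    rw [Matrix.trace_add, Matrix.trace_kronecker, Matrix.trace_kronecker, Matrix.trace_one]
    simp [Fintype.card_fin]
    ring
  ext i j
  have e1 : ∑ k : Fin d, (B₁ ⊗ₖ (1 : Matrix (Fin d) (Fin d) ℂ)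
      + (1 : Matrix (Fin d) (Fin d) ℂ) ⊗ₖ B₂) (i, k) (j, k)
      = (d : ℂ) * B₁ i j + (1 : Matrix (Fin d) (Fin d) ℂ) i j * B₂.trace := by
    simp [Matrix.kroneckerMap_apply, Finset.sum_add_distrib, ← Finset.mul_sum,
      ← Finset.sum_mul, Matrix.trace, Matrix.diag, Matrix.one_apply, mul_comm]
  have e2 : ∑ k : Fin d, (B₁ ⊗ₖ (1 : Matrix (Fin d) (Fin d) ℂ)
      + (1 : Matrix (Fin d) (Fin d) ℂ) ⊗ₖ B₂) (k, i) (k, j)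
      = B₁.trace * (1 : Matrix (Fin d) (Fin d) ℂ) i j + (d : ℂ) * B₂ i j := by
    simp [Matrix.kroneckerMap_apply, Finset.sum_add_distrib, ← Finset.mul_sum,
      ← Finset.sum_mul, Matrix.trace, Matrix.diag, Matrix.one_apply, mul_comm]
  simp only [Phi, LinearMap.coe_mk, AddHom.coe_mk, Matrix.of_apply, htr]
  rw [e1, e2]
  simp only [Matrix.add_apply, Matrix.one_apply]
  by_cases h : i = j <;> simp only [h, if_true, if_false] <;> field_simp <;> ring

lemma Phi_conjTranspose (X : Matrix (Fin d × Fin d) (Fin d × Fin d) ℂ) :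
    Phi d Xᴴ = (Phi d X)ᴴ := by
  ext i j
  by_cases h : i = j
  · subst h
    simp [Phi, Matrix.conjTranspose_apply, Matrix.trace, Matrix.diag, Matrix.one_apply,
      star_sub, star_mul', star_sum, mul_comm]
  · have h' : ¬ j = i := fun hji => h hji.symm
    simp [Phi, Matrix.conjTranspose_apply, Matrix.one_apply, h, h',
      star_sub, star_mul', star_sum, mul_comm]

end TwoSimAux

namespace TwoSimAux

lemma trace_vecMulVec_mul {n : Type*} [Fintype n] (v : n → ℂ) (A : Matrix n n ℂ) :
    (Matrix.vecMulVec v (star v) * A).trace = star v ⬝ᵥ A *ᵥ v := by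
  simp [Matrix.trace, Matrix.diag, Matrix.mul_apply, Matrix.vecMulVec_apply, dotProduct,
    Matrix.mulVec, Finset.mul_sum]
  rw [Finset.sum_comm]
  exact Finset.sum_congr rfl fun k _ => Finset.sum_congr rfl fun l _ => by ring

lemma trace_vecMulVec {n : Type*} [Fintype n] (v : n → ℂ) :
    (Matrix.vecMulVec v (star v)).trace = star v ⬝ᵥ v := by
  simp [Matrix.trace, Matrix.diag, Matrix.vecMulVec_apply, dotProduct, mul_comm]

lemma vecMulVec_posSemidef {n : Type*} [Fintype n] (v : n → ℂ) :
    (Matrix.vecMulVec v (star v)).PosSemidef := by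
  have h : Matrix.vecMulVec v (star v)
      = (Matrix.replicateRow Unit (star v))ᴴ * Matrix.replicateRow Unit (star v) := by
    ext i j
    simp [Matrix.vecMulVec_apply, Matrix.mul_apply, Matrix.replicateRow_apply,
      Matrix.conjTranspose_apply]
  rw [h]; exact Matrix.posSemidef_conjTranspose_mul_self _

lemma vecMulVec_kron (v : Fin d → ℂ) :
    Matrix.vecMulVec v (star v) ⊗ₖ Matrix.vecMulVec v (star v)
      = Matrix.vecMulVec (fun p : Fin d × Fin d => v p.1 * v p.2)
          (star fun p : Fin d × Fin d => v p.1 * v p.2) := by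
  ext ⟨i, j⟩ ⟨k, l⟩
  simp [Matrix.vecMulVec_apply, Matrix.kroneckerMap_apply, star_mul']
  ring

lemma eq_of_quadForm (A B : Matrix (Fin d) (Fin d) ℂ)
    (h : ∀ v : Fin d → ℂ, star v ⬝ᵥ A *ᵥ v = star v ⬝ᵥ B *ᵥ v) : A = B := by
  have hz : ∀ v : Fin d → ℂ, star v ⬝ᵥ (A - B) *ᵥ v = 0 := by
    intro v; simp [Matrix.sub_mulVec, dotProduct_sub, h v]
  have hT : Matrix.toEuclideanLin (A - B) = 0 := by
    rw [← inner_map_self_eq_zero]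
    intro x
    rw [EuclideanSpace.inner_eq_star_dotProduct]
    simp only [Matrix.toEuclideanLin_apply, Equiv.apply_symm_apply]
    rw [dotProduct_comm, Matrix.star_dotProduct, hz _, star_zero]
  have h0 : A - B = 0 := by
    have := Matrix.toEuclideanLin.map_eq_zero_iff.mp hT
    exact this
  exact sub_eq_zero.mp h0

example (r : ℝ) (z : ℂ) (hr : 0 ≤ r) (hz : 0 ≤ z) : 0 ≤ (r : ℂ) * z :=
  mul_nonneg (by exact_mod_cast Complex.zero_le_real.mpr hr) hz

end TwoSimAux

/-- if `M` is `2`-compatible with a `2`-copy joint observable `G` whose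
effects all lie in the linear span of
`{B₁ ⊗ 𝟙 + 𝟙 ⊗ B₂ : B₁, B₂ Hermitian}`, then `M` is `2`-simulable. -/
theorem twoSimulable_of_span_joint_observable
    {d na nx nl : ℕ}
    (M : Fin nx → Fin na → Matrix (Fin d) (Fin d) ℂ)
    (hM : ∀ x, IsPOVM (M x))
    (G : Fin nl → Matrix (Fin d × Fin d) (Fin d × Fin d) ℂ)
    (hG : IsPOVM G)
    (p : Fin nx → Fin nl → Fin na → ℝ)
    (hp0 : ∀ x l a, 0 ≤ p x l a) (hp1 : ∀ x l, ∑ a, p x l a = 1)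
    (hcomp : ∀ ρ : Matrix (Fin d) (Fin d) ℂ, IsDensity ρ → ∀ x a,
      (ρ * M x a).trace = ∑ l, p x l a • ((ρ ⊗ₖ ρ) * G l).trace)
    (hspan : ∀ l, G l ∈ Submodule.span ℂ
      {X : Matrix (Fin d × Fin d) (Fin d × Fin d) ℂ |
        ∃ B₁ B₂ : Matrix (Fin d) (Fin d) ℂ, B₁.IsHermitian ∧ B₂.IsHermitian ∧
          X = B₁ ⊗ₖ (1 : Matrix (Fin d) (Fin d) ℂ)
              + (1 : Matrix (Fin d) (Fin d) ℂ) ⊗ₖ B₂}) :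
    KSimulable 2 M := by
  classical
  rcases Nat.eq_zero_or_pos d with hd0 | hdpos
  · subst hd0
    refine ⟨0, fun _ => Fin.elim0, fun _ _ => (1 : ℝ)/2, fun _ _ b _ => 0,
      ?_, ?_, ?_, ?_, ?_, ?_⟩
    · intro y
      refine ⟨fun i => i.elim0, ?_⟩
      ext i j; exact i.elim0
    · intro x y; norm_num
    · intro x; rw [Fin.sum_univ_two]; norm_num
    · intro x y b a; exact le_refl 0
    · intro x y b; exact b.elim0
    · intro x a; ext i j; exact i.elim0
  have hdC : (d : ℂ) ≠ 0 := Nat.cast_ne_zero.mpr hdpos.ne'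
  set N : Fin nl → Matrix (Fin d) (Fin d) ℂ := fun l => TwoSimAux.Phi d (G l) with hN
  -- key trace identity from the span hypothesis
  have hkey : ∀ l (ρ : Matrix (Fin d) (Fin d) ℂ), ρ.trace = 1 →
      ((ρ ⊗ₖ ρ) * G l).trace = (ρ * N l).trace := by
    intro l
    refine Submodule.span_induction
      (p := fun X _ => ∀ ρ : Matrix (Fin d) (Fin d) ℂ, ρ.trace = 1 →
        ((ρ ⊗ₖ ρ) * X).trace = (ρ * TwoSimAux.Phi d X).trace) ?_ ?_ ?_ ?_ (hspan l)
    · rintro X ⟨B₁, B₂, -, -, rfl⟩ ρ hρ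
      rw [TwoSimAux.Phi_gen hdC]
      rw [Matrix.mul_add, Matrix.mul_add, Matrix.trace_add, Matrix.trace_add,
        ← Matrix.mul_kronecker_mul, ← Matrix.mul_kronecker_mul, Matrix.trace_kronecker,
        Matrix.trace_kronecker, Matrix.mul_one, hρ]
      ring
    · intro ρ hρ; simp
    · intro X Y hX hY ihX ihY ρ hρ
      rw [map_add, Matrix.mul_add, Matrix.mul_add, Matrix.trace_add, Matrix.trace_add,
        ihX ρ hρ, ihY ρ hρ]
    · intro c X hX ih ρ hρ
      rw [_root_.map_smul, Matrix.mul_smul, Matrix.mul_smul, Matrix.trace_smul, Matrix.trace_smul,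
        ih ρ hρ]
  -- rank-one densities
  have hrank : ∀ v : Fin d → ℂ, v ≠ 0 →
      ∃ ρ : Matrix (Fin d) (Fin d) ℂ, IsDensity ρ ∧
        (∀ A : Matrix (Fin d) (Fin d) ℂ,
          star v ⬝ᵥ A *ᵥ v = ((∑ i, Complex.normSq (v i) : ℝ) : ℂ) * (ρ * A).trace) ∧
        (∀ X : Matrix (Fin d × Fin d) (Fin d × Fin d) ℂ, X.PosSemidef →
          0 ≤ ((ρ ⊗ₖ ρ) * X).trace) := by
    intro v hv
    set s : ℝ := ∑ i, Complex.normSq (v i) with hs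
    have hspos : 0 < s := by
      have : ∃ i, v i ≠ 0 := by
        by_contra h
        push_neg at h
        exact hv (funext h)
      obtain ⟨i, hi⟩ := this
      exact Finset.sum_pos' (fun j _ => Complex.normSq_nonneg _)
        ⟨i, Finset.mem_univ i, Complex.normSq_pos.mpr hi⟩
    have hsC : ((s : ℂ)) ≠ 0 := by exact_mod_cast hspos.ne'
    set P : Matrix (Fin d) (Fin d) ℂ := Matrix.vecMulVec v (star v) with hP
    have hPt : P.trace = (s : ℂ) := by
      rw [hP, TwoSimAux.trace_vecMulVec]
      simp [dotProduct, hs, Complex.normSq_eq_conj_mul_self]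
    refine ⟨((s : ℂ))⁻¹ • P, ⟨?_, ?_⟩, ?_, ?_⟩
    · -- PosSemidef
      have hu : ((s : ℂ))⁻¹ • P
          = Matrix.vecMulVec ((((Real.sqrt s)⁻¹ : ℝ) : ℂ) • v)
              (star ((((Real.sqrt s)⁻¹ : ℝ) : ℂ) • v)) := by
        ext i j
        have hss : ((Real.sqrt s)⁻¹ : ℝ) * (Real.sqrt s)⁻¹ = s⁻¹ := by
          rw [← mul_inv, Real.mul_self_sqrt hspos.le]
        simp only [Matrix.smul_apply, hP, Matrix.vecMulVec_apply, Pi.smul_apply,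
          Pi.star_apply, star_smul, smul_eq_mul, Complex.star_def, Complex.conj_ofReal,
          _root_.map_mul]
        rw [show ((((Real.sqrt s)⁻¹ : ℝ) : ℂ) * v i) * ((((Real.sqrt s)⁻¹ : ℝ) : ℂ)
            * (starRingEnd ℂ) (v j))
          = (((((Real.sqrt s)⁻¹ : ℝ) * ((Real.sqrt s)⁻¹ : ℝ) : ℝ)) : ℂ)
            * (v i * (starRingEnd ℂ) (v j)) by push_cast; ring, hss]
        push_cast
        ring
      rw [hu]
      exact TwoSimAux.vecMulVec_posSemidef _
    · rw [Matrix.trace_smul, hPt, smul_eq_mul, inv_mul_cancel₀ hsC]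
    · intro A
      rw [Matrix.smul_mul, Matrix.trace_smul, hP, TwoSimAux.trace_vecMulVec_mul,
        smul_eq_mul, ← mul_assoc, mul_inv_cancel₀ hsC, one_mul]
    · intro X hX
      have hkron : (((s : ℂ))⁻¹ • P) ⊗ₖ (((s : ℂ))⁻¹ • P)
          = (((s : ℂ))⁻¹ * ((s : ℂ))⁻¹) • Matrix.vecMulVec
              (fun q : Fin d × Fin d => v q.1 * v q.2)
              (star fun q : Fin d × Fin d => v q.1 * v q.2) := by
        rw [Matrix.smul_kronecker, Matrix.kronecker_smul, smul_smul, hP,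
          TwoSimAux.vecMulVec_kron]
      rw [hkron, Matrix.smul_mul, Matrix.trace_smul, smul_eq_mul,
        TwoSimAux.trace_vecMulVec_mul]
      have h1 : (0 : ℂ) ≤ ((((s⁻¹ * s⁻¹ : ℝ)) : ℂ)) := by
        rw [Complex.zero_le_real]
        positivity
      have h2 : ((s : ℂ))⁻¹ * ((s : ℂ))⁻¹ = (((s⁻¹ * s⁻¹ : ℝ)) : ℂ) := by push_cast; ring
      rw [h2]
      exact mul_nonneg h1 (hX.dotProduct_mulVec_nonneg _)
  -- each N l is a POVM element
  have hNPSD : ∀ l, (N l).PosSemidef := by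
    intro l
    refine Matrix.PosSemidef.of_dotProduct_mulVec_nonneg ?_ ?_
    · show (TwoSimAux.Phi d (G l))ᴴ = TwoSimAux.Phi d (G l)
      rw [← TwoSimAux.Phi_conjTranspose, (hG.1 l).1]
    · intro u
      by_cases hu : u = 0
      · subst hu; simp
      obtain ⟨ρ, hρ, hquad, hpos⟩ := hrank u hu
      rw [hquad (N l), ← hkey l ρ hρ.2]
      have h0 : (0 : ℂ) ≤ (((∑ i, Complex.normSq (u i) : ℝ)) : ℂ) := by
        rw [Complex.zero_le_real]
        exact Finset.sum_nonneg fun i _ => Complex.normSq_nonneg _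
      exact mul_nonneg h0 (hpos (G l) (hG.1 l))
  have hNsum : ∑ l, N l = 1 := by
    have h1 : ∑ l, N l = TwoSimAux.Phi d (∑ l, G l) := (map_sum _ _ _).symm
    rw [h1, hG.2]
    have h2 := TwoSimAux.Phi_gen hdC (1 : Matrix (Fin d) (Fin d) ℂ) 0
    simp only [Matrix.kronecker_zero, add_zero] at h2
    rw [show (1 : Matrix (Fin d × Fin d) (Fin d × Fin d) ℂ)
      = (1 : Matrix (Fin d) (Fin d) ℂ) ⊗ₖ (1 : Matrix (Fin d) (Fin d) ℂ) from
      Matrix.one_kronecker_one.symm]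
    exact h2
  -- the assemblage is a coarse-graining of N
  have hMN : ∀ x a, M x a = ∑ l, p x l a • N l := by
    intro x a
    apply TwoSimAux.eq_of_quadForm
    intro v
    by_cases hv : v = 0
    · subst hv; simp
    obtain ⟨ρ, hρ, hquad, hpos⟩ := hrank v hv
    rw [hquad (M x a), hquad (∑ l, p x l a • N l), hcomp ρ hρ x a]
    congr 1
    rw [Matrix.mul_sum, Matrix.trace_sum]
    refine Finset.sum_congr rfl fun l _ => ?_
    rw [hkey l ρ hρ.2, Matrix.mul_smul, Matrix.trace_smul]
  refine ⟨nl, fun _ l => N l, fun _ _ => (1 : ℝ)/2, fun x _ l a => p x l a,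
    ?_, ?_, ?_, ?_, ?_, ?_⟩
  · intro y; exact ⟨hNPSD, hNsum⟩
  · intro x y; norm_num
  · intro x; rw [Fin.sum_univ_two]; norm_num
  · intro x y l a; exact hp0 x l a
  · intro x y l; exact hp1 x l
  · intro x a
    rw [Fin.sum_univ_two, ← add_smul]
    norm_num
    exact hMN x a
end
end

section
/- Let Ã be a Hermitian d_A×d_A matrix and B̃ a Hermitian d_B×d_B matrix such that G = Ã ⊗ 𝟙 + 𝟙 ⊗ B̃ is positive semidefinite. Then there exist positive semidefinite matrices A (of size d_A) and B (of size d_B) such that G = A ⊗ 𝟙 + 𝟙 ⊗ B. -/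
open Matrix BigOperators
open scoped Kronecker ComplexOrder

private lemma quad_kron {m n : ℕ} (M : Matrix (Fin m) (Fin m) ℂ) (N : Matrix (Fin n) (Fin n) ℂ)
    (x : Fin m → ℂ) (v : Fin n → ℂ) :
    star (fun p : Fin m × Fin n => x p.1 * v p.2) ⬝ᵥ
      ((M ⊗ₖ N) *ᵥ fun p : Fin m × Fin n => x p.1 * v p.2)
    = (star x ⬝ᵥ (M *ᵥ x)) * (star v ⬝ᵥ (N *ᵥ v)) := by
  have key : ∀ (f : Fin m → Fin m → ℂ) (g : Fin n → Fin n → ℂ),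
      (∑ i, ∑ k, f i k) * (∑ j, ∑ l, g j l) = ∑ i, ∑ j, ∑ k, ∑ l, f i k * g j l := by
    intro f g
    rw [Finset.sum_mul_sum]
    exact Finset.sum_congr rfl fun i _ => Finset.sum_congr rfl fun j _ =>
      Finset.sum_mul_sum _ _ _ _
  have h1 : (star x ⬝ᵥ (M *ᵥ x)) = ∑ i, ∑ k, star (x i) * (M i k * x k) := by
    simp [dotProduct, mulVec, Finset.mul_sum]
  have h2 : (star v ⬝ᵥ (N *ᵥ v)) = ∑ j, ∑ l, star (v j) * (N j l * v l) := by
    simp [dotProduct, mulVec, Finset.mul_sum]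
  rw [h1, h2, key]
  conv_lhs => simp only [dotProduct, mulVec, kroneckerMap_apply, Pi.star_apply, star_mul',
    Fintype.sum_prod_type, Finset.mul_sum]
  exact Finset.sum_congr rfl fun i _ => Finset.sum_congr rfl fun j _ =>
    Finset.sum_congr rfl fun k _ => Finset.sum_congr rfl fun l _ => by ring


/-- if `Atil ⊗ 𝟙 + 𝟙 ⊗ Btil` is positive semidefinite for Hermitian `Atil`, `Btil`,
then it can be rewritten as `A ⊗ 𝟙 + 𝟙 ⊗ B` with `A`, `B` positive semidefinite. -/
theorem psd_decomposition_of_kronecker_sum {dA dB : ℕ}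
    (Atil : Matrix (Fin dA) (Fin dA) ℂ) (Btil : Matrix (Fin dB) (Fin dB) ℂ)
    (hA : Atil.IsHermitian) (hB : Btil.IsHermitian)
    (hpsd : (Atil ⊗ₖ (1 : Matrix (Fin dB) (Fin dB) ℂ)
        + (1 : Matrix (Fin dA) (Fin dA) ℂ) ⊗ₖ Btil).PosSemidef) :
    ∃ (A : Matrix (Fin dA) (Fin dA) ℂ) (B : Matrix (Fin dB) (Fin dB) ℂ),
      A.PosSemidef ∧ B.PosSemidef ∧
      Atil ⊗ₖ (1 : Matrix (Fin dB) (Fin dB) ℂ) + (1 : Matrix (Fin dA) (Fin dA) ℂ) ⊗ₖ Btil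
        = A ⊗ₖ (1 : Matrix (Fin dB) (Fin dB) ℂ) + (1 : Matrix (Fin dA) (Fin dA) ℂ) ⊗ₖ B := by
  rcases Nat.eq_zero_or_pos dB with hdB | hdB
  · subst hdB
    exact ⟨0, 0, .zero, .zero, by ext ⟨i, j⟩; exact j.elim0⟩
  rcases Nat.eq_zero_or_pos dA with hdA | hdA
  · subst hdA
    exact ⟨0, 0, .zero, .zero, by ext ⟨i, j⟩; exact i.elim0⟩
  haveI : Nonempty (Fin dB) := Fin.pos_iff_nonempty.mp hdB
  obtain ⟨j0, hj0⟩ : ∃ j0, ∀ j, hB.eigenvalues j0 ≤ hB.eigenvalues j :=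
    Finite.exists_min _
  set c : ℝ := hB.eigenvalues j0 with hc
  set v : Fin dB → ℂ := ⇑(hB.eigenvectorBasis j0) with hv
  have hv1 : star v ⬝ᵥ v = 1 := by
    have h := hB.eigenvectorBasis.orthonormal.1 j0
    rw [hv, dotProduct_comm, ← EuclideanSpace.inner_eq_star_dotProduct]
    rw [@inner_self_eq_norm_sq_to_K ℂ] at *
    rw [h]; norm_num
  have hvB : star v ⬝ᵥ (Btil *ᵥ v) = (c : ℂ) := by
    rw [hv, hB.mulVec_eigenvectorBasis, ← hv, dotProduct_smul, hv1]
    simp [hc, Complex.real_smul]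
  refine ⟨Atil + (c : ℂ) • 1, Btil - (c : ℂ) • 1, ?_, ?_, ?_⟩
  · -- A PSD
    refine posSemidef_iff_dotProduct_mulVec.mpr ⟨?_, ?_⟩
    · refine hA.add ?_
      simp [Matrix.IsHermitian, conjTranspose_smul, Complex.star_def, Complex.conj_ofReal]
    · intro x
      have h := hpsd.dotProduct_mulVec_nonneg (fun p : Fin dA × Fin dB => x p.1 * v p.2)
      rw [add_mulVec, dotProduct_add, quad_kron, quad_kron, one_mulVec, one_mulVec,
        hv1, hvB] at h
      have e : star x ⬝ᵥ ((Atil + (c : ℂ) • 1) *ᵥ x)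
          = (star x ⬝ᵥ (Atil *ᵥ x)) * 1 + (star x ⬝ᵥ x) * (c : ℂ) := by
        rw [add_mulVec, dotProduct_add, smul_mulVec, one_mulVec, dotProduct_smul]
        ring_nf
      rw [e]; exact h
  · -- B PSD
    have key : Btil - (c : ℂ) • 1
        = (hB.eigenvectorUnitary : Matrix (Fin dB) (Fin dB) ℂ)
          * diagonal (fun j => ((hB.eigenvalues j - c : ℝ) : ℂ))
          * (hB.eigenvectorUnitary : Matrix (Fin dB) (Fin dB) ℂ)ᴴ := by
      have hUU : (hB.eigenvectorUnitary : Matrix (Fin dB) (Fin dB) ℂ)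
          * star (hB.eigenvectorUnitary : Matrix (Fin dB) (Fin dB) ℂ) = 1 :=
        (Matrix.mem_unitaryGroup_iff).mp hB.eigenvectorUnitary.2
      have hdiag : diagonal (fun j => ((hB.eigenvalues j - c : ℝ) : ℂ))
          = diagonal (RCLike.ofReal ∘ hB.eigenvalues) - (c : ℂ) • 1 := by
        ext i j
        by_cases h : i = j
        · subst h; simp [Complex.ofReal_sub]
        · simp [diagonal_apply_ne _ h, one_apply_ne h]
      rw [hdiag, Matrix.mul_sub, Matrix.sub_mul, ← Matrix.star_eq_conjTranspose,
        ← Unitary.conjStarAlgAut_apply (S := ℂ), ← hB.spectral_theorem]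
      congr 1
      rw [Matrix.mul_smul, mul_one, Matrix.smul_mul, hUU]
    rw [key]
    refine PosSemidef.mul_mul_conjTranspose_same ?_ _
    rw [posSemidef_diagonal_iff]
    intro j
    rw [Complex.zero_le_real]
    exact sub_nonneg.mpr (hj0 j)
  · -- equality
    rw [add_kronecker, sub_eq_add_neg, kronecker_add, ← neg_smul, smul_kronecker,
      kronecker_smul, one_kronecker_one, neg_smul, ← sub_eq_add_neg]
    abel
end

section
/- Let {A_λ}_λ be positive semidefinite d_A×d_A matrices and {B_λ}_λ positive semidefinite d_B×d_B matrices such that Σ_λ (A_λ ⊗ 𝟙 + 𝟙 ⊗ B_λ) = 𝟙 ⊗ 𝟙. Then Σ_λ A_λ = q 𝟙 and Σ_λ B_λ = (1-q) 𝟙 where q = 1 - (Σ_λ tr[B_λ])/d_B ∈ [0,1], and consequently there exist POVMs {C_λ}_λ on ℂ^{d_A} and {D_λ}_λ on ℂ^{d_B} such that A_λ ⊗ 𝟙 + 𝟙 ⊗ B_λ = q C_λ ⊗ 𝟙 + (1-q) 𝟙 ⊗ D_λ for all λ. -/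
open Matrix BigOperators
open scoped Kronecker ComplexOrder

noncomputable section

lemma psd_smul_real {d : ℕ} {M : Matrix (Fin d) (Fin d) ℂ} (hM : M.PosSemidef) {r : ℝ} (hr : 0 ≤ r) :
    (r • M).PosSemidef := by
  refine Matrix.PosSemidef.of_dotProduct_mulVec_nonneg ?_ ?_
  · ext i j
    simp [conjTranspose_apply, hM.1.apply i j, Complex.real_smul, mul_comm]
  · intro x
    have h1 : (r • M) *ᵥ x = r • (M *ᵥ x) := by
      ext i; simp [mulVec, dotProduct, Finset.smul_sum, smul_mul_assoc, mul_assoc]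
    rw [h1, dotProduct_smul]
    have := hM.dotProduct_mulVec_nonneg x
    rw [Complex.real_smul]
    exact mul_nonneg (by exact_mod_cast Complex.zero_le_real.mpr hr) this

lemma quad_sum_eq {d n : ℕ} (A : Fin n → Matrix (Fin d) (Fin d) ℂ) (x : Fin d → ℂ) :
    ∑ l, star x ⬝ᵥ (A l) *ᵥ x = star x ⬝ᵥ (∑ l, A l) *ᵥ x := by
  simp only [dotProduct, mulVec, Matrix.sum_apply, Finset.sum_mul, Finset.mul_sum]
  rw [Finset.sum_comm]
  refine Finset.sum_congr rfl fun i _ => ?_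
  rw [Finset.sum_comm]

lemma psd_sum_zero {d n : ℕ} {A : Fin n → Matrix (Fin d) (Fin d) ℂ}
    (hA : ∀ l, (A l).PosSemidef) (h : ∑ l, A l = 0) : ∀ l, A l = 0 := by
  have hq : ∀ (x : Fin d → ℂ) l, star x ⬝ᵥ (A l) *ᵥ x = 0 := by
    intro x l
    have hs : ∑ l, star x ⬝ᵥ (A l) *ᵥ x = 0 := by
      rw [quad_sum_eq, h]; simp
    exact (Finset.sum_eq_zero_iff_of_nonneg (fun l _ => (hA l).dotProduct_mulVec_nonneg x)).mp hs l (Finset.mem_univ l)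
  intro l
  ext i j
  have h0 : A l *ᵥ Pi.single j 1 = 0 := ((hA l).dotProduct_mulVec_zero_iff _).mp (hq _ l)
  have := congrFun h0 i
  simpa using this

lemma sum_kron_one {dA dB n : ℕ} (A : Fin n → Matrix (Fin dA) (Fin dA) ℂ) :
    ∑ l, A l ⊗ₖ (1 : Matrix (Fin dB) (Fin dB) ℂ)
      = (∑ l, A l) ⊗ₖ (1 : Matrix (Fin dB) (Fin dB) ℂ) := by
  ext ⟨i, j⟩ ⟨i', j'⟩
  simp [Matrix.sum_apply, kroneckerMap_apply, Finset.sum_mul]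

lemma one_kron_sum {dA dB n : ℕ} (B : Fin n → Matrix (Fin dB) (Fin dB) ℂ) :
    ∑ l, (1 : Matrix (Fin dA) (Fin dA) ℂ) ⊗ₖ B l
      = (1 : Matrix (Fin dA) (Fin dA) ℂ) ⊗ₖ (∑ l, B l) := by
  ext ⟨i, j⟩ ⟨i', j'⟩
  simp [Matrix.sum_apply, kroneckerMap_apply, Finset.mul_sum]

lemma const_povm {d n : ℕ} (hd : 0 < d) (hn : n ≠ 0) :
    IsPOVM (fun _ : Fin n => ((n : ℝ))⁻¹ • (1 : Matrix (Fin d) (Fin d) ℂ)) := by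
  constructor
  · intro _
    exact psd_smul_real Matrix.PosSemidef.one (by positivity)
  · rw [Finset.sum_const, Finset.card_univ, Fintype.card_fin,
      ← Nat.cast_smul_eq_nsmul ℝ, smul_smul,
      mul_inv_cancel₀ (by exact_mod_cast hn), one_smul]

/-- if PSD families `A_λ`, `B_λ` satisfy
`∑_λ (A_λ ⊗ 𝟙 + 𝟙 ⊗ B_λ) = 𝟙 ⊗ 𝟙`, then `∑_λ A_λ = q 𝟙` and `∑_λ B_λ = (1-q) 𝟙` with
`q = 1 - (∑_λ tr B_λ)/d_B ∈ [0,1]`, and there are POVMs `C`, `D` with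
`A_λ ⊗ 𝟙 + 𝟙 ⊗ B_λ = q C_λ ⊗ 𝟙 + (1-q) 𝟙 ⊗ D_λ`. -/
theorem povm_mixture_of_kronecker_sum_normalization {dA dB n : ℕ}
    (hdA : 0 < dA) (hdB : 0 < dB)
    (A : Fin n → Matrix (Fin dA) (Fin dA) ℂ)
    (B : Fin n → Matrix (Fin dB) (Fin dB) ℂ)
    (hA : ∀ l, (A l).PosSemidef) (hB : ∀ l, (B l).PosSemidef)
    (hsum : ∑ l, (A l ⊗ₖ (1 : Matrix (Fin dB) (Fin dB) ℂ)
        + (1 : Matrix (Fin dA) (Fin dA) ℂ) ⊗ₖ B l)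
      = (1 : Matrix (Fin dA) (Fin dA) ℂ) ⊗ₖ (1 : Matrix (Fin dB) (Fin dB) ℂ)) :
    (0 ≤ 1 - (∑ l, (B l).trace.re) / dB) ∧
    (1 - (∑ l, (B l).trace.re) / dB ≤ 1) ∧
    (∑ l, A l = (1 - (∑ l, (B l).trace.re) / dB : ℝ) • (1 : Matrix (Fin dA) (Fin dA) ℂ)) ∧
    (∑ l, B l = (1 - (1 - (∑ l, (B l).trace.re) / dB) : ℝ) • (1 : Matrix (Fin dB) (Fin dB) ℂ)) ∧
    ∃ (C : Fin n → Matrix (Fin dA) (Fin dA) ℂ) (D : Fin n → Matrix (Fin dB) (Fin dB) ℂ),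
      IsPOVM C ∧ IsPOVM D ∧
      ∀ l, A l ⊗ₖ (1 : Matrix (Fin dB) (Fin dB) ℂ)
            + (1 : Matrix (Fin dA) (Fin dA) ℂ) ⊗ₖ B l
          = (1 - (∑ l', (B l').trace.re) / dB : ℝ) •
              (C l ⊗ₖ (1 : Matrix (Fin dB) (Fin dB) ℂ))
            + (1 - (1 - (∑ l', (B l').trace.re) / dB) : ℝ) •
              ((1 : Matrix (Fin dA) (Fin dA) ℂ) ⊗ₖ D l) := by
  have hSA : (∑ l, A l).PosSemidef :=
    Finset.sum_induction _ _ (fun a b ha hb => ha.add hb) Matrix.PosSemidef.zero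
      (fun l _ => hA l)
  have hSB : (∑ l, B l).PosSemidef :=
    Finset.sum_induction _ _ (fun a b ha hb => ha.add hb) Matrix.PosSemidef.zero
      (fun l _ => hB l)
  have hK : (∑ l, A l) ⊗ₖ (1 : Matrix (Fin dB) (Fin dB) ℂ)
      + (1 : Matrix (Fin dA) (Fin dA) ℂ) ⊗ₖ (∑ l, B l)
      = (1 : Matrix (Fin dA) (Fin dA) ℂ) ⊗ₖ (1 : Matrix (Fin dB) (Fin dB) ℂ) := by
    rw [← sum_kron_one, ← one_kron_sum, ← Finset.sum_add_distrib]
    exact hsum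
  have hE : ∀ (i i' : Fin dA) (j j' : Fin dB),
      (∑ l, A l) i i' * (1 : Matrix (Fin dB) (Fin dB) ℂ) j j'
        + (1 : Matrix (Fin dA) (Fin dA) ℂ) i i' * (∑ l, B l) j j'
      = (1 : Matrix (Fin dA) (Fin dA) ℂ) i i' * (1 : Matrix (Fin dB) (Fin dB) ℂ) j j' := by
    intro i i' j j'
    have := congrFun (congrFun hK (i, j)) (i', j')
    simpa [kroneckerMap_apply] using this
  set i0 : Fin dA := ⟨0, hdA⟩ with hi0
  set j0 : Fin dB := ⟨0, hdB⟩ with hj0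
  have hSAoff : ∀ i i', i ≠ i' → (∑ l, A l) i i' = 0 := by
    intro i i' hne
    have := hE i i' j0 j0
    simpa [Matrix.one_apply, hne] using this
  have hSBoff : ∀ j j', j ≠ j' → (∑ l, B l) j j' = 0 := by
    intro j j' hne
    have := hE i0 i0 j j'
    simpa [Matrix.one_apply, hne] using this
  have hdiag : ∀ (i : Fin dA) (j : Fin dB), (∑ l, A l) i i + (∑ l, B l) j j = 1 := by
    intro i j
    have := hE i i j j
    simpa [Matrix.one_apply] using this
  -- diagonal entries are nonnegative
  have hdiagB : ∀ j, (0:ℂ) ≤ (∑ l, B l) j j := by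
    intro j
    have := hSB.dotProduct_mulVec_nonneg (Pi.single j 1)
    simpa [dotProduct, Pi.single_apply] using this
  have hdiagA : ∀ i, (0:ℂ) ≤ (∑ l, A l) i i := by
    intro i
    have := hSA.dotProduct_mulVec_nonneg (Pi.single i 1)
    simpa [dotProduct, Pi.single_apply] using this
  set c0 : ℂ := (∑ l, B l) j0 j0 with hc0def
  have hSBj : ∀ j, (∑ l, B l) j j = c0 := by
    intro j
    have h1 := hdiag i0 j
    have h2 := hdiag i0 j0
    rw [← h2] at h1
    exact add_left_cancel h1
  have hSAi : ∀ i, (∑ l, A l) i i = 1 - c0 := by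
    intro i
    have := hdiag i j0
    linear_combination this
  have hc0nn : (0:ℂ) ≤ c0 := hdiagB j0
  have hc0im : c0.im = 0 := by
    have := (Complex.le_def.mp hc0nn).2
    simpa using this.symm
  set c : ℝ := c0.re with hcdef
  have hc0eq : c0 = (c : ℂ) := by
    apply Complex.ext <;> simp [hc0im, hcdef]
  have hcnn : 0 ≤ c := by
    have := (Complex.le_def.mp hc0nn).1
    simpa using this
  have hcle : c ≤ 1 := by
    have h1 : (0:ℂ) ≤ 1 - c0 := by rw [← hSAi i0]; exact hdiagA i0
    have := (Complex.le_def.mp h1).1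
    simp only [Complex.zero_re, Complex.sub_re, Complex.one_re] at this
    linarith
  -- trace computation
  have htr : ∑ l, (B l).trace.re = dB * c := by
    have h1 : ∑ l, (B l).trace = (∑ l, B l).trace := (Matrix.trace_sum _ _).symm
    have h2 : (∑ l, B l).trace = (dB : ℂ) * c0 := by
      rw [Matrix.trace]
      simp only [Matrix.diag]
      rw [Finset.sum_congr rfl (fun j _ => hSBj j), Finset.sum_const, Finset.card_univ,
        Fintype.card_fin, nsmul_eq_mul]
    have h3 : ∑ l, (B l).trace.re = (∑ l, (B l).trace).re := by
      rw [Complex.re_sum]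
    rw [h3, h1, h2, hc0eq]
    push_cast
    simp
  have hdB' : (dB : ℝ) ≠ 0 := Nat.cast_ne_zero.mpr hdB.ne'
  have hdiv : (∑ l, (B l).trace.re) / (dB : ℝ) = c := by
    rw [htr]; field_simp
  have hSAeq : ∑ l, A l = ((1 - c : ℝ)) • (1 : Matrix (Fin dA) (Fin dA) ℂ) := by
    ext i i'
    by_cases h : i = i'
    · subst h
      simp only [Matrix.smul_apply, Matrix.one_apply_eq, hSAi i, hc0eq, Complex.real_smul]
      push_cast
      ring
    · simp [Matrix.smul_apply, Matrix.one_apply, h, hSAoff i i' h]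
  have hSBeq : ∑ l, B l = ((c : ℝ)) • (1 : Matrix (Fin dB) (Fin dB) ℂ) := by
    ext j j'
    by_cases h : j = j'
    · subst h
      simp [Matrix.smul_apply, Matrix.one_apply_eq, hSBj j, hc0eq, Complex.real_smul]
    · simp [Matrix.smul_apply, Matrix.one_apply, h, hSBoff j j' h]
  have hn : n ≠ 0 := by
    rintro rfl
    have := hdiag i0 j0
    simp at this
  refine ⟨by rw [hdiv]; linarith, by rw [hdiv]; linarith, by rw [hdiv]; exact hSAeq,
    by rw [hdiv, sub_sub_cancel]; exact hSBeq, ?_⟩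
  by_cases hq0 : (1:ℝ) - c = 0
  · -- q = 0 : each A l = 0, D = B
    have hc1 : c = 1 := by linarith
    have hSA0 : ∑ l, A l = 0 := by rw [hSAeq, hq0, zero_smul]
    have hAl : ∀ l, A l = 0 := psd_sum_zero hA hSA0
    refine ⟨fun _ => ((n : ℝ))⁻¹ • (1 : Matrix (Fin dA) (Fin dA) ℂ), B,
      const_povm hdA hn, ⟨hB, by rw [hSBeq, hc1, one_smul]⟩, ?_⟩
    intro l
    rw [hdiv, hq0, zero_smul, zero_add, sub_zero, one_smul, hAl l]
    simp
  · by_cases hp0 : c = 0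
    · -- q = 1 : each B l = 0, C = A
      have hSB0 : ∑ l, B l = 0 := by rw [hSBeq, hp0]; simp
      have hBl : ∀ l, B l = 0 := psd_sum_zero hB hSB0
      refine ⟨A, fun _ => ((n : ℝ))⁻¹ • (1 : Matrix (Fin dB) (Fin dB) ℂ),
        ⟨hA, by rw [hSAeq, hp0]; simp⟩, const_povm hdB hn, ?_⟩
      intro l
      rw [hdiv, hp0, sub_zero, sub_self, zero_smul, add_zero, one_smul, hBl l]
      simp
    · -- 0 < c < 1
      have hq0' : 0 < 1 - c := lt_of_le_of_ne (by linarith) (Ne.symm hq0)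
      have hp0' : 0 < c := lt_of_le_of_ne hcnn (Ne.symm hp0)
      refine ⟨fun l => ((1 - c : ℝ))⁻¹ • A l, fun l => ((c : ℝ))⁻¹ • B l,
        ⟨fun l => psd_smul_real (hA l) (by positivity), ?_⟩,
        ⟨fun l => psd_smul_real (hB l) (by positivity), ?_⟩, ?_⟩
      · rw [← Finset.smul_sum, hSAeq, smul_smul, inv_mul_cancel₀ hq0, one_smul]
      · rw [← Finset.smul_sum, hSBeq, smul_smul, inv_mul_cancel₀ hp0, one_smul]
      · intro l
        rw [hdiv, smul_kronecker, kronecker_smul, smul_smul, smul_smul,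
          mul_inv_cancel₀ hq0, sub_sub_cancel, mul_inv_cancel₀ hp0, one_smul, one_smul]
end
end
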